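/- arXiv:2009.00509 — 3 statements merged into one kernel-verified Lean document; each statement's English description precedes it below -/
import Mathlib

section
/- Let ℓ₁, ℓ₂ : ℂ → ℝ be continuous, bounded functions with ℓᵢ(w) > 0 for all w, and fix z ∈ ℂ. For ε > 0 and i ∈ {1,2}, let χᵢ,ε : ℂ → ℝ be the indicator function of the set {u ∈ ℂ : ‖u‖ > ε·(ℓᵢ(z) + ℓᵢ(z + u))/2}. Then the limit as ε → 0⁺ of ∫_ℂ (χ₁,ε(u) − χ₂,ε(u)) · ‖u‖⁻² du (Lebesgue integral over ℂ ≅ ℝ²) exists and equals −2π · log(ℓ₁(z)/ℓ₂(z)). -/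
open MeasureTheory Real Filter Set

set_option maxHeartbeats 1000000

lemma measurableSet_annulus (a b : ℝ) :
    MeasurableSet {u : ℂ | a < ‖u‖ ∧ ‖u‖ ≤ b} := by
  rw [Set.setOf_and]
  exact ((isOpen_lt continuous_const continuous_norm).measurableSet).inter
    ((isClosed_le continuous_norm continuous_const).measurableSet)

lemma annulus_integrable (a b : ℝ) (ha : 0 < a) :
    Integrable (fun u : ℂ =>
      Set.indicator {u : ℂ | a < ‖u‖ ∧ ‖u‖ ≤ b} (fun _ => (1:ℝ)) u * (‖u‖ ^ 2)⁻¹) := by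
  have hmeas := measurableSet_annulus a b
  have heq : (fun u : ℂ =>
      Set.indicator {u : ℂ | a < ‖u‖ ∧ ‖u‖ ≤ b} (fun _ => (1:ℝ)) u * (‖u‖ ^ 2)⁻¹)
      = Set.indicator {u : ℂ | a < ‖u‖ ∧ ‖u‖ ≤ b} (fun u => (‖u‖ ^ 2)⁻¹) := by
    funext u
    by_cases hu : u ∈ {u : ℂ | a < ‖u‖ ∧ ‖u‖ ≤ b} <;> simp [Set.indicator_apply, hu]
  rw [heq, integrable_indicator_iff hmeas]
  refine Measure.integrableOn_of_bounded (M := (a ^ 2)⁻¹) ?_ ?_ ?_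
  · have hsub : {u : ℂ | a < ‖u‖ ∧ ‖u‖ ≤ b} ⊆ Metric.closedBall 0 b := fun u hu => by
      simpa [mem_closedBall_zero_iff] using hu.2
    exact ((measure_mono hsub).trans_lt (measure_closedBall_lt_top)).ne
  · exact Measurable.aestronglyMeasurable (by fun_prop)
  · refine (ae_restrict_iff' hmeas).2 (ae_of_all _ fun u hu => ?_)
    rw [Real.norm_eq_abs, abs_of_nonneg (by positivity)]
    have h1 : a ^ 2 ≤ ‖u‖ ^ 2 := by nlinarith [hu.1, ha, norm_nonneg u]
    exact inv_anti₀ (by positivity) h1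

lemma annulus_integral (a b : ℝ) (ha : 0 < a) (hab : a ≤ b) :
    ∫ u : ℂ, Set.indicator {u : ℂ | a < ‖u‖ ∧ ‖u‖ ≤ b} (fun _ => (1:ℝ)) u * (‖u‖ ^ 2)⁻¹
      = 2 * π * Real.log (b / a) := by
  have h1 : (fun u : ℂ =>
      Set.indicator {u : ℂ | a < ‖u‖ ∧ ‖u‖ ≤ b} (fun _ => (1:ℝ)) u * (‖u‖ ^ 2)⁻¹)
      = fun u : ℂ =>
        (fun y : ℝ => Set.indicator (Set.Ioc a b) (fun _ => (1:ℝ)) y * (y ^ 2)⁻¹) ‖u‖ := by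
    funext u
    by_cases hu : a < ‖u‖ ∧ ‖u‖ ≤ b <;>
      simp [Set.indicator_apply, Set.mem_Ioc, Set.mem_setOf_eq, hu]
  rw [h1, MeasureTheory.integral_fun_norm_addHaar volume
    (fun y : ℝ => Set.indicator (Set.Ioc a b) (fun _ => (1:ℝ)) y * (y ^ 2)⁻¹)]
  have hdim : Module.finrank ℝ ℂ = 2 := Complex.finrank_real_complex
  rw [hdim]
  have hvol : volume.real (Metric.ball (0:ℂ) 1) = π := by
    simp [measureReal_def, Complex.volume_ball]
  rw [hvol]
  have h2 : EqOn (fun y : ℝ => y ^ (2 - 1) •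
        (Set.indicator (Set.Ioc a b) (fun _ => (1:ℝ)) y * (y ^ 2)⁻¹))
      (fun y : ℝ => Set.indicator (Set.Ioc a b) (fun y : ℝ => y⁻¹) y) (Set.Ioi 0) := by
    intro y _
    simp only [pow_one, smul_eq_mul]
    by_cases hmem : y ∈ Set.Ioc a b
    · have hy0 : y ≠ 0 := (lt_trans ha hmem.1).ne'
      simp only [Set.indicator_apply, if_pos hmem]
      field_simp
      ring
    · simp [Set.indicator_apply, hmem]
  rw [setIntegral_congr_fun measurableSet_Ioi h2]
  rw [MeasureTheory.integral_indicator measurableSet_Ioc,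
    Measure.restrict_restrict measurableSet_Ioc]
  have hsub : Set.Ioc a b ∩ Set.Ioi 0 = Set.Ioc a b :=
    Set.inter_eq_self_of_subset_left (fun y hy => lt_trans ha hy.1)
  rw [hsub]
  rw [← intervalIntegral.integral_of_le hab, integral_inv_of_pos ha (lt_of_lt_of_le ha hab)]
  simp [smul_eq_mul]
  ring

lemma abs_indicator_sub_indicator_le (s t A : Set ℂ)
    (hst : ∀ u, (u ∈ s ∧ u ∉ t) ∨ (u ∈ t ∧ u ∉ s) → u ∈ A) (u : ℂ) :
    |Set.indicator s (fun _ => (1:ℝ)) u - Set.indicator t (fun _ => (1:ℝ)) u|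
      ≤ Set.indicator A (fun _ => (1:ℝ)) u := by
  have hA : (0:ℝ) ≤ Set.indicator A (fun _ => (1:ℝ)) u :=
    Set.indicator_nonneg (fun _ _ => zero_le_one) u
  by_cases hs : u ∈ s <;> by_cases ht : u ∈ t
  · simpa [Set.indicator_apply, hs, ht] using hA
  · have := hst u (Or.inl ⟨hs, ht⟩)
    rw [Set.indicator_of_mem hs, Set.indicator_of_notMem ht, Set.indicator_of_mem this]
    norm_num
  · have := hst u (Or.inr ⟨ht, hs⟩)
    rw [Set.indicator_of_notMem hs, Set.indicator_of_mem ht, Set.indicator_of_mem this]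
    norm_num
  · simpa [Set.indicator_apply, hs, ht] using hA

lemma indicator_annulus_eq (c d : ℝ) (hcd : c ≤ d) (u : ℂ) :
    Set.indicator {u : ℂ | c < ‖u‖ ∧ ‖u‖ ≤ d} (fun _ => (1:ℝ)) u
      = Set.indicator {u : ℂ | ‖u‖ > c} (fun _ => (1:ℝ)) u
        - Set.indicator {u : ℂ | ‖u‖ > d} (fun _ => (1:ℝ)) u := by
  simp only [Set.indicator_apply, Set.mem_setOf_eq, gt_iff_lt]
  split_ifs <;> simp_all <;> linarith

theorem cutoff_aux (ℓ₁ ℓ₂ : ℂ → ℝ)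
    (h₁c : Continuous ℓ₁) (h₂c : Continuous ℓ₂)
    (h₁b : ∃ C, ∀ w, ℓ₁ w ≤ C) (h₂b : ∃ C, ∀ w, ℓ₂ w ≤ C)
    (h₁p : ∀ w, 0 < ℓ₁ w) (h₂p : ∀ w, 0 < ℓ₂ w) (z : ℂ) (hab : ℓ₁ z ≤ ℓ₂ z) :
    Tendsto
      (fun ε : ℝ =>
        ∫ u : ℂ,
          ((Set.indicator {u : ℂ | ‖u‖ > ε * (ℓ₁ z + ℓ₁ (z + u)) / 2}
              (fun _ => (1 : ℝ)) u)
            - (Set.indicator {u : ℂ | ‖u‖ > ε * (ℓ₂ z + ℓ₂ (z + u)) / 2}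
              (fun _ => (1 : ℝ)) u)) * (‖u‖ ^ 2)⁻¹ ∂volume)
      (nhdsWithin 0 (Set.Ioi 0))
      (nhds (2 * π * Real.log (ℓ₂ z / ℓ₁ z))) := by
  obtain ⟨C₁, hC₁⟩ := h₁b
  obtain ⟨C₂, hC₂⟩ := h₂b
  have ha : 0 < ℓ₁ z := h₁p z
  have hb : 0 < ℓ₂ z := h₂p z
  set a := ℓ₁ z with ha_def
  set b := ℓ₂ z with hb_def
  set C := max C₁ C₂ with hC_def
  have hC1 : ∀ w, ℓ₁ w ≤ C := fun w => (hC₁ w).trans (le_max_left _ _)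
  have hC2 : ∀ w, ℓ₂ w ≤ C := fun w => (hC₂ w).trans (le_max_right _ _)
  have hC0 : 0 < C := lt_of_lt_of_le ha (hC1 z)
  rw [Metric.tendsto_nhds]
  intro η hη
  -- choose δ
  have hE : Tendsto (fun δ : ℝ =>
      2 * π * (Real.log ((a + δ) / (a - δ)) + Real.log ((b + δ) / (b - δ))))
      (nhds 0) (nhds 0) := by
    have l1 : Tendsto (fun δ : ℝ => (a + δ) / (a - δ)) (nhds 0) (nhds 1) := by
      have n1 : Tendsto (fun δ : ℝ => a + δ) (nhds 0) (nhds a) := by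
        simpa using (tendsto_const_nhds.add tendsto_id :
          Tendsto (fun δ : ℝ => a + δ) (nhds 0) (nhds (a + 0)))
      have d1 : Tendsto (fun δ : ℝ => a - δ) (nhds 0) (nhds a) := by
        simpa using (tendsto_const_nhds.sub tendsto_id :
          Tendsto (fun δ : ℝ => a - δ) (nhds 0) (nhds (a - 0)))
      rw [← div_self ha.ne']
      exact (n1.div d1 ha.ne' :
        Tendsto (fun δ : ℝ => (a + δ) / (a - δ)) (nhds 0) (nhds (a / a)))
    have l2 : Tendsto (fun δ : ℝ => (b + δ) / (b - δ)) (nhds 0) (nhds 1) := by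
      have n1 : Tendsto (fun δ : ℝ => b + δ) (nhds 0) (nhds b) := by
        simpa using (tendsto_const_nhds.add tendsto_id :
          Tendsto (fun δ : ℝ => b + δ) (nhds 0) (nhds (b + 0)))
      have d1 : Tendsto (fun δ : ℝ => b - δ) (nhds 0) (nhds b) := by
        simpa using (tendsto_const_nhds.sub tendsto_id :
          Tendsto (fun δ : ℝ => b - δ) (nhds 0) (nhds (b - 0)))
      rw [← div_self hb.ne']
      exact (n1.div d1 hb.ne' :
        Tendsto (fun δ : ℝ => (b + δ) / (b - δ)) (nhds 0) (nhds (b / b)))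
    have L1 := (Real.continuousAt_log one_ne_zero).tendsto.comp l1
    have L2 := (Real.continuousAt_log one_ne_zero).tendsto.comp l2
    rw [Real.log_one] at L1 L2
    have h := (L1.add L2).const_mul (2 * π)
    simpa [Function.comp] using h
  have hEev : ∀ᶠ δ in nhdsWithin (0:ℝ) (Set.Ioi 0),
      2 * π * (Real.log ((a + δ) / (a - δ)) + Real.log ((b + δ) / (b - δ))) < η :=
    (hE.mono_left nhdsWithin_le_nhds).eventually_lt_const hη
  have hmemev : ∀ᶠ δ in nhdsWithin (0:ℝ) (Set.Ioi 0), δ ∈ Set.Ioo 0 a :=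
    Filter.eventually_mem_set.mpr (Ioo_mem_nhdsGT ha)
  obtain ⟨δ, hEδ, hδ0, hδa⟩ := (hEev.and hmemev).exists
  -- continuity control
  obtain ⟨ρ₁, hρ₁0, hρ₁⟩ := Metric.continuous_iff.mp h₁c z δ hδ0
  obtain ⟨ρ₂, hρ₂0, hρ₂⟩ := Metric.continuous_iff.mp h₂c z δ hδ0
  set ρ := min ρ₁ ρ₂ with hρ_def
  have hρ0 : 0 < ρ := lt_min hρ₁0 hρ₂0
  have hcont1 : ∀ u : ℂ, ‖u‖ < ρ → |ℓ₁ (z + u) - a| < δ := by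
    intro u hu
    have hd : dist (z + u) z < ρ₁ := by
      rw [dist_eq_norm, add_sub_cancel_left]
      exact hu.trans_le (min_le_left _ _)
    simpa [Real.dist_eq] using hρ₁ (z + u) hd
  have hcont2 : ∀ u : ℂ, ‖u‖ < ρ → |ℓ₂ (z + u) - b| < δ := by
    intro u hu
    have hd : dist (z + u) z < ρ₂ := by
      rw [dist_eq_norm, add_sub_cancel_left]
      exact hu.trans_le (min_le_right _ _)
    simpa [Real.dist_eq] using hρ₂ (z + u) hd
  filter_upwards [Filter.eventually_mem_set.mpr
    (Ioo_mem_nhdsGT (div_pos hρ0 hC0))] with ε hε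
  have hε0 : 0 < ε := hε.1
  have hεC : ε * C < ρ := (lt_div_iff₀ hC0).mp hε.2
  have hδb : δ < b := lt_of_lt_of_le hδa hab
  -- the comparison annulus integrals
  have hfT_int := annulus_integrable (ε * a) (ε * b) (mul_pos hε0 ha)
  have hfT_val : ∫ u : ℂ,
      Set.indicator {u : ℂ | ε * a < ‖u‖ ∧ ‖u‖ ≤ ε * b} (fun _ => (1:ℝ)) u * (‖u‖ ^ 2)⁻¹
      = 2 * π * Real.log (b / a) := by
    rw [annulus_integral (ε * a) (ε * b) (mul_pos hε0 ha)
      (by nlinarith), mul_div_mul_left _ _ hε0.ne']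
  have hA1_int := annulus_integrable (ε * (a - δ)) (ε * (a + δ)) (mul_pos hε0 (by linarith))
  have hA1_val : ∫ u : ℂ,
      Set.indicator {u : ℂ | ε * (a - δ) < ‖u‖ ∧ ‖u‖ ≤ ε * (a + δ)} (fun _ => (1:ℝ)) u
        * (‖u‖ ^ 2)⁻¹ = 2 * π * Real.log ((a + δ) / (a - δ)) := by
    rw [annulus_integral (ε * (a - δ)) (ε * (a + δ)) (mul_pos hε0 (by linarith))
      (by nlinarith), mul_div_mul_left _ _ hε0.ne']
  have hA2_int := annulus_integrable (ε * (b - δ)) (ε * (b + δ)) (mul_pos hε0 (by linarith))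
  have hA2_val : ∫ u : ℂ,
      Set.indicator {u : ℂ | ε * (b - δ) < ‖u‖ ∧ ‖u‖ ≤ ε * (b + δ)} (fun _ => (1:ℝ)) u
        * (‖u‖ ^ 2)⁻¹ = 2 * π * Real.log ((b + δ) / (b - δ)) := by
    rw [annulus_integral (ε * (b - δ)) (ε * (b + δ)) (mul_pos hε0 (by linarith))
      (by nlinarith), mul_div_mul_left _ _ hε0.ne']
  -- measurability of fS
  have hS1_meas : MeasurableSet {u : ℂ | ‖u‖ > ε * (a + ℓ₁ (z + u)) / 2} := by
    refine (isOpen_lt ?_ continuous_norm).measurableSet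
    fun_prop
  have hS2_meas : MeasurableSet {u : ℂ | ‖u‖ > ε * (b + ℓ₂ (z + u)) / 2} := by
    refine (isOpen_lt ?_ continuous_norm).measurableSet
    fun_prop
  have hfS_meas : AEStronglyMeasurable (fun u : ℂ =>
      ((Set.indicator {u : ℂ | ‖u‖ > ε * (a + ℓ₁ (z + u)) / 2} (fun _ => (1 : ℝ)) u)
        - (Set.indicator {u : ℂ | ‖u‖ > ε * (b + ℓ₂ (z + u)) / 2} (fun _ => (1 : ℝ)) u))
        * (‖u‖ ^ 2)⁻¹) volume := by
    refine Measurable.aestronglyMeasurable ?_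
    exact ((((measurable_const).indicator hS1_meas).sub
      ((measurable_const).indicator hS2_meas)).mul ((measurable_norm.pow_const 2).inv))
  -- support bound for integrability
  have hbound0 : ∀ u : ℂ,
      ‖((Set.indicator {u : ℂ | ‖u‖ > ε * (a + ℓ₁ (z + u)) / 2} (fun _ => (1 : ℝ)) u)
        - (Set.indicator {u : ℂ | ‖u‖ > ε * (b + ℓ₂ (z + u)) / 2} (fun _ => (1 : ℝ)) u))
        * (‖u‖ ^ 2)⁻¹‖
      ≤ Set.indicator {u : ℂ | ε * (a / 2) < ‖u‖ ∧ ‖u‖ ≤ ε * C} (fun _ => (1:ℝ)) u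
        * (‖u‖ ^ 2)⁻¹ := by
    intro u
    rw [norm_mul, Real.norm_eq_abs, Real.norm_eq_abs, abs_of_nonneg (by positivity :
      (0:ℝ) ≤ (‖u‖ ^ 2)⁻¹)]
    refine mul_le_mul_of_nonneg_right ?_ (by positivity)
    refine abs_indicator_sub_indicator_le _ _ _ ?_ u
    rintro v (⟨hv1, hv2⟩ | ⟨hv1, hv2⟩) <;>
      simp only [Set.mem_setOf_eq, gt_iff_lt, not_lt] at hv1 hv2 ⊢
    · exact ⟨by nlinarith [h₁p (z + v)], by nlinarith [hC2 z, hC2 (z + v)]⟩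
    · exact ⟨by nlinarith [h₂p (z + v), hab], by nlinarith [hC1 z, hC1 (z + v)]⟩
  have hfS_int : Integrable (fun u : ℂ =>
      ((Set.indicator {u : ℂ | ‖u‖ > ε * (a + ℓ₁ (z + u)) / 2} (fun _ => (1 : ℝ)) u)
        - (Set.indicator {u : ℂ | ‖u‖ > ε * (b + ℓ₂ (z + u)) / 2} (fun _ => (1 : ℝ)) u))
        * (‖u‖ ^ 2)⁻¹) :=
    (annulus_integrable (ε * (a / 2)) (ε * C) (by positivity)).mono'
      hfS_meas (ae_of_all _ hbound0)
  -- the bounding function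
  have hg_int : Integrable (fun u : ℂ =>
      (Set.indicator {u : ℂ | ε * (a - δ) < ‖u‖ ∧ ‖u‖ ≤ ε * (a + δ)} (fun _ => (1:ℝ)) u
        + Set.indicator {u : ℂ | ε * (b - δ) < ‖u‖ ∧ ‖u‖ ≤ ε * (b + δ)} (fun _ => (1:ℝ)) u)
        * (‖u‖ ^ 2)⁻¹) := by
    have heq : (fun u : ℂ =>
        (Set.indicator {u : ℂ | ε * (a - δ) < ‖u‖ ∧ ‖u‖ ≤ ε * (a + δ)} (fun _ => (1:ℝ)) u
          + Set.indicator {u : ℂ | ε * (b - δ) < ‖u‖ ∧ ‖u‖ ≤ ε * (b + δ)} (fun _ => (1:ℝ)) u)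
          * (‖u‖ ^ 2)⁻¹)
        = (fun u : ℂ =>
          Set.indicator {u : ℂ | ε * (a - δ) < ‖u‖ ∧ ‖u‖ ≤ ε * (a + δ)} (fun _ => (1:ℝ)) u
          * (‖u‖ ^ 2)⁻¹
          + Set.indicator {u : ℂ | ε * (b - δ) < ‖u‖ ∧ ‖u‖ ≤ ε * (b + δ)} (fun _ => (1:ℝ)) u
          * (‖u‖ ^ 2)⁻¹) := by
      funext u; ring
    rw [heq]
    exact hA1_int.add hA2_int
  have hg_val : ∫ u : ℂ,
      (Set.indicator {u : ℂ | ε * (a - δ) < ‖u‖ ∧ ‖u‖ ≤ ε * (a + δ)} (fun _ => (1:ℝ)) u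
        + Set.indicator {u : ℂ | ε * (b - δ) < ‖u‖ ∧ ‖u‖ ≤ ε * (b + δ)} (fun _ => (1:ℝ)) u)
        * (‖u‖ ^ 2)⁻¹
      = 2 * π * (Real.log ((a + δ) / (a - δ)) + Real.log ((b + δ) / (b - δ))) := by
    have heq : (fun u : ℂ =>
        (Set.indicator {u : ℂ | ε * (a - δ) < ‖u‖ ∧ ‖u‖ ≤ ε * (a + δ)} (fun _ => (1:ℝ)) u
          + Set.indicator {u : ℂ | ε * (b - δ) < ‖u‖ ∧ ‖u‖ ≤ ε * (b + δ)} (fun _ => (1:ℝ)) u)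
          * (‖u‖ ^ 2)⁻¹)
        = (fun u : ℂ =>
          Set.indicator {u : ℂ | ε * (a - δ) < ‖u‖ ∧ ‖u‖ ≤ ε * (a + δ)} (fun _ => (1:ℝ)) u
          * (‖u‖ ^ 2)⁻¹
          + Set.indicator {u : ℂ | ε * (b - δ) < ‖u‖ ∧ ‖u‖ ≤ ε * (b + δ)} (fun _ => (1:ℝ)) u
          * (‖u‖ ^ 2)⁻¹) := by
      funext u; ring
    rw [heq, integral_add hA1_int hA2_int, hA1_val, hA2_val]
    ring
  -- the main estimate
  rw [Real.dist_eq]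
  have key : |(∫ u : ℂ,
      ((Set.indicator {u : ℂ | ‖u‖ > ε * (a + ℓ₁ (z + u)) / 2} (fun _ => (1 : ℝ)) u)
        - (Set.indicator {u : ℂ | ‖u‖ > ε * (b + ℓ₂ (z + u)) / 2} (fun _ => (1 : ℝ)) u))
        * (‖u‖ ^ 2)⁻¹)
      - ∫ u : ℂ,
        Set.indicator {u : ℂ | ε * a < ‖u‖ ∧ ‖u‖ ≤ ε * b} (fun _ => (1:ℝ)) u * (‖u‖ ^ 2)⁻¹|
      ≤ 2 * π * (Real.log ((a + δ) / (a - δ)) + Real.log ((b + δ) / (b - δ))) := by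
    rw [← integral_sub hfS_int hfT_int, ← hg_val, ← Real.norm_eq_abs]
    refine norm_integral_le_of_norm_le hg_int (ae_of_all _ fun u => ?_)
    have hT := indicator_annulus_eq (ε * a) (ε * b) (by nlinarith) u
    have hstep : ((Set.indicator {u : ℂ | ‖u‖ > ε * (a + ℓ₁ (z + u)) / 2} (fun _ => (1 : ℝ)) u)
        - (Set.indicator {u : ℂ | ‖u‖ > ε * (b + ℓ₂ (z + u)) / 2} (fun _ => (1 : ℝ)) u))
        * (‖u‖ ^ 2)⁻¹
        - Set.indicator {u : ℂ | ε * a < ‖u‖ ∧ ‖u‖ ≤ ε * b} (fun _ => (1:ℝ)) u * (‖u‖ ^ 2)⁻¹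
      = ((Set.indicator {u : ℂ | ‖u‖ > ε * (a + ℓ₁ (z + u)) / 2} (fun _ => (1 : ℝ)) u
            - Set.indicator {u : ℂ | ‖u‖ > ε * a} (fun _ => (1:ℝ)) u)
          - (Set.indicator {u : ℂ | ‖u‖ > ε * (b + ℓ₂ (z + u)) / 2} (fun _ => (1 : ℝ)) u
            - Set.indicator {u : ℂ | ‖u‖ > ε * b} (fun _ => (1:ℝ)) u)) * (‖u‖ ^ 2)⁻¹ := by
      rw [hT]; ring
    rw [Real.norm_eq_abs, hstep, abs_mul, abs_of_nonneg (by positivity : (0:ℝ) ≤ (‖u‖ ^ 2)⁻¹)]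
    refine mul_le_mul_of_nonneg_right ?_ (by positivity)
    have e1 : |Set.indicator {u : ℂ | ‖u‖ > ε * (a + ℓ₁ (z + u)) / 2} (fun _ => (1 : ℝ)) u
        - Set.indicator {u : ℂ | ‖u‖ > ε * a} (fun _ => (1:ℝ)) u|
        ≤ Set.indicator {u : ℂ | ε * (a - δ) < ‖u‖ ∧ ‖u‖ ≤ ε * (a + δ)} (fun _ => (1:ℝ)) u := by
      refine abs_indicator_sub_indicator_le _ _ _ ?_ u
      rintro v (⟨hv1, hv2⟩ | ⟨hv1, hv2⟩) <;>
        simp only [Set.mem_setOf_eq, gt_iff_lt, not_lt] at hv1 hv2 ⊢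
      · have hvρ : ‖v‖ < ρ := by
          calc ‖v‖ ≤ ε * a := hv2
          _ ≤ ε * C := by nlinarith [hC1 z]
          _ < ρ := hεC
        have hd := abs_lt.mp (hcont1 v hvρ)
        exact ⟨by nlinarith [hd.1], by nlinarith⟩
      · have hvρ : ‖v‖ < ρ := by
          calc ‖v‖ ≤ ε * (a + ℓ₁ (z + v)) / 2 := hv2
          _ ≤ ε * C := by nlinarith [hC1 z, hC1 (z + v)]
          _ < ρ := hεC
        have hd := abs_lt.mp (hcont1 v hvρ)
        exact ⟨by nlinarith, by nlinarith [hd.2]⟩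
    have e2 : |Set.indicator {u : ℂ | ‖u‖ > ε * (b + ℓ₂ (z + u)) / 2} (fun _ => (1 : ℝ)) u
        - Set.indicator {u : ℂ | ‖u‖ > ε * b} (fun _ => (1:ℝ)) u|
        ≤ Set.indicator {u : ℂ | ε * (b - δ) < ‖u‖ ∧ ‖u‖ ≤ ε * (b + δ)} (fun _ => (1:ℝ)) u := by
      refine abs_indicator_sub_indicator_le _ _ _ ?_ u
      rintro v (⟨hv1, hv2⟩ | ⟨hv1, hv2⟩) <;>
        simp only [Set.mem_setOf_eq, gt_iff_lt, not_lt] at hv1 hv2 ⊢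
      · have hvρ : ‖v‖ < ρ := by
          calc ‖v‖ ≤ ε * b := hv2
          _ ≤ ε * C := by nlinarith [hC2 z]
          _ < ρ := hεC
        have hd := abs_lt.mp (hcont2 v hvρ)
        exact ⟨by nlinarith [hd.1], by nlinarith⟩
      · have hvρ : ‖v‖ < ρ := by
          calc ‖v‖ ≤ ε * (b + ℓ₂ (z + v)) / 2 := hv2
          _ ≤ ε * C := by nlinarith [hC2 z, hC2 (z + v)]
          _ < ρ := hεC
        have hd := abs_lt.mp (hcont2 v hvρ)
        exact ⟨by nlinarith, by nlinarith [hd.2]⟩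
    calc |(Set.indicator {u : ℂ | ‖u‖ > ε * (a + ℓ₁ (z + u)) / 2} (fun _ => (1 : ℝ)) u
            - Set.indicator {u : ℂ | ‖u‖ > ε * a} (fun _ => (1:ℝ)) u)
          - (Set.indicator {u : ℂ | ‖u‖ > ε * (b + ℓ₂ (z + u)) / 2} (fun _ => (1 : ℝ)) u
            - Set.indicator {u : ℂ | ‖u‖ > ε * b} (fun _ => (1:ℝ)) u)|
        ≤ |Set.indicator {u : ℂ | ‖u‖ > ε * (a + ℓ₁ (z + u)) / 2} (fun _ => (1 : ℝ)) u
            - Set.indicator {u : ℂ | ‖u‖ > ε * a} (fun _ => (1:ℝ)) u|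
          + |Set.indicator {u : ℂ | ‖u‖ > ε * (b + ℓ₂ (z + u)) / 2} (fun _ => (1 : ℝ)) u
            - Set.indicator {u : ℂ | ‖u‖ > ε * b} (fun _ => (1:ℝ)) u| := abs_sub _ _
      _ ≤ _ := add_le_add e1 e2
  calc |(∫ u : ℂ,
      ((Set.indicator {u : ℂ | ‖u‖ > ε * (a + ℓ₁ (z + u)) / 2} (fun _ => (1 : ℝ)) u)
        - (Set.indicator {u : ℂ | ‖u‖ > ε * (b + ℓ₂ (z + u)) / 2} (fun _ => (1 : ℝ)) u))
        * (‖u‖ ^ 2)⁻¹) - 2 * π * Real.log (b / a)|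
      = |(∫ u : ℂ,
      ((Set.indicator {u : ℂ | ‖u‖ > ε * (a + ℓ₁ (z + u)) / 2} (fun _ => (1 : ℝ)) u)
        - (Set.indicator {u : ℂ | ‖u‖ > ε * (b + ℓ₂ (z + u)) / 2} (fun _ => (1 : ℝ)) u))
        * (‖u‖ ^ 2)⁻¹)
      - ∫ u : ℂ,
        Set.indicator {u : ℂ | ε * a < ‖u‖ ∧ ‖u‖ ≤ ε * b} (fun _ => (1:ℝ)) u * (‖u‖ ^ 2)⁻¹| := by
        rw [hfT_val]
    _ ≤ 2 * π * (Real.log ((a + δ) / (a - δ)) + Real.log ((b + δ) / (b - δ))) := key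
    _ < η := hEδ

/-- The cutoff dependence of the regularized propagator: the difference of the
two regularized integrals of `‖u‖⁻²` converges, as `ε → 0⁺`, to
`-2π · log (ℓ₁ z / ℓ₂ z)`. -/
theorem cutoff_difference_limit (ℓ₁ ℓ₂ : ℂ → ℝ)
    (h₁c : Continuous ℓ₁) (h₂c : Continuous ℓ₂)
    (h₁b : ∃ C, ∀ w, ℓ₁ w ≤ C) (h₂b : ∃ C, ∀ w, ℓ₂ w ≤ C)
    (h₁p : ∀ w, 0 < ℓ₁ w) (h₂p : ∀ w, 0 < ℓ₂ w) (z : ℂ) :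
    Tendsto
      (fun ε : ℝ =>
        ∫ u : ℂ,
          ((Set.indicator {u : ℂ | ‖u‖ > ε * (ℓ₁ z + ℓ₁ (z + u)) / 2}
              (fun _ => (1 : ℝ)) u)
            - (Set.indicator {u : ℂ | ‖u‖ > ε * (ℓ₂ z + ℓ₂ (z + u)) / 2}
              (fun _ => (1 : ℝ)) u)) * (‖u‖ ^ 2)⁻¹ ∂volume)
      (nhdsWithin 0 (Set.Ioi 0))
      (nhds (-(2 * π) * Real.log (ℓ₁ z / ℓ₂ z))) := by
  rcases le_total (ℓ₁ z) (ℓ₂ z) with hab | hab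
  · have H := cutoff_aux ℓ₁ ℓ₂ h₁c h₂c h₁b h₂b h₁p h₂p z hab
    have hval : 2 * π * Real.log (ℓ₂ z / ℓ₁ z) = -(2 * π) * Real.log (ℓ₁ z / ℓ₂ z) := by
      rw [Real.log_div (h₂p z).ne' (h₁p z).ne', Real.log_div (h₁p z).ne' (h₂p z).ne']
      ring
    rwa [hval] at H
  · have H := cutoff_aux ℓ₂ ℓ₁ h₂c h₁c h₂b h₁b h₂p h₁p z hab
    have hfun : (fun ε : ℝ =>
        ∫ u : ℂ,
          ((Set.indicator {u : ℂ | ‖u‖ > ε * (ℓ₁ z + ℓ₁ (z + u)) / 2}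
              (fun _ => (1 : ℝ)) u)
            - (Set.indicator {u : ℂ | ‖u‖ > ε * (ℓ₂ z + ℓ₂ (z + u)) / 2}
              (fun _ => (1 : ℝ)) u)) * (‖u‖ ^ 2)⁻¹ ∂volume)
        = fun ε : ℝ =>
          -∫ u : ℂ,
            ((Set.indicator {u : ℂ | ‖u‖ > ε * (ℓ₂ z + ℓ₂ (z + u)) / 2}
                (fun _ => (1 : ℝ)) u)
              - (Set.indicator {u : ℂ | ‖u‖ > ε * (ℓ₁ z + ℓ₁ (z + u)) / 2}
                (fun _ => (1 : ℝ)) u)) * (‖u‖ ^ 2)⁻¹ ∂volume := by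
      funext ε
      rw [← integral_neg]
      congr 1
      funext u
      ring
    have hval : -(2 * π) * Real.log (ℓ₁ z / ℓ₂ z)
        = -(2 * π * Real.log (ℓ₁ z / ℓ₂ z)) := by ring
    rw [hfun, hval]
    exact H.neg
end

section
/- Let ℓ₁, ℓ₂ : ℂ → ℝ be continuous, bounded functions with ℓᵢ(w) > 0 for all w, and let φ : ℂ × ℂ → ℂ be continuous with compact support. For ε > 0 and i ∈ {1,2}, let χᵢ,ε : ℂ × ℂ → ℝ be the indicator function of the set {(z,u) : ‖u‖ > ε·(ℓᵢ(z) + ℓᵢ(z + u))/2}. Then the limit as ε → 0⁺ of the double Lebesgue integral ∫_ℂ ∫_ℂ (χ₁,ε(z,u) − χ₂,ε(z,u)) · φ(z,u) · ‖u‖⁻² du dz exists and equals −2π · ∫_ℂ log(ℓ₁(z)/ℓ₂(z)) · φ(z,0) dz. -/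
open MeasureTheory Real Filter Set


noncomputable def annFun (r R : ℝ) (u : ℂ) : ℝ :=
  if r < ‖u‖ ∧ ‖u‖ ≤ R then (‖u‖ ^ 2)⁻¹ else 0

lemma annFun_nonneg (r R : ℝ) (u : ℂ) : 0 ≤ annFun r R u := by
  unfold annFun; split <;> positivity

lemma annFun_eq_indicator (r R : ℝ) :
    annFun r R = Set.indicator {u : ℂ | r < ‖u‖ ∧ ‖u‖ ≤ R} (fun u => (‖u‖ ^ 2)⁻¹) := by
  funext u; simp [annFun, Set.indicator_apply, Set.mem_setOf_eq]

lemma measurableSet_ann (r R : ℝ) : MeasurableSet {u : ℂ | r < ‖u‖ ∧ ‖u‖ ≤ R} := by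
  apply MeasurableSet.inter
  · exact measurableSet_lt measurable_const measurable_norm
  · exact measurableSet_le measurable_norm measurable_const

lemma annFun_measurable (r R : ℝ) : Measurable (annFun r R) := by
  rw [annFun_eq_indicator]
  exact ((measurable_norm.pow_const 2).inv).indicator (measurableSet_ann r R)

lemma annFun_integrable (r R : ℝ) (hr : 0 < r) : Integrable (annFun r R) := by
  have hb : ∀ u : ℂ, ‖annFun r R u‖ ≤
      Set.indicator (Metric.closedBall (0:ℂ) R) (fun _ => (r ^ 2)⁻¹) u := by
    intro u
    rw [Real.norm_of_nonneg (annFun_nonneg r R u)]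
    unfold annFun
    split
    · rename_i h
      rw [Set.indicator_of_mem (by simpa [Metric.mem_closedBall, Complex.dist_eq,
          sub_zero] using h.2)]
      have h2 : r ^ 2 ≤ ‖u‖ ^ 2 := by nlinarith [h.1, hr, norm_nonneg u]
      exact inv_anti₀ (by positivity) h2
    · exact Set.indicator_nonneg (fun _ _ => by positivity) u
  refine Integrable.mono' ?_ (annFun_measurable r R).aestronglyMeasurable (ae_of_all _ hb)
  rw [integrable_indicator_iff measurableSet_closedBall]
  exact (integrableOn_const_iff).2 (Or.inr measure_closedBall_lt_top)

lemma annFun_integral (r R : ℝ) (hr : 0 < r) (hR : r ≤ R) :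
    ∫ u : ℂ, annFun r R u = 2 * π * Real.log (R / r) := by
  have h1 : (fun u : ℂ => annFun r R u)
      = fun u : ℂ => (fun y : ℝ => Set.indicator (Set.Ioc r R) (fun y => (y ^ 2)⁻¹) y) ‖u‖ := by
    funext u; simp [annFun, Set.indicator_apply, Set.mem_Ioc]
  rw [h1, MeasureTheory.integral_fun_norm_addHaar volume
      (fun y : ℝ => Set.indicator (Set.Ioc r R) (fun y => (y ^ 2)⁻¹) y)]
  have hdim : Module.finrank ℝ ℂ = 2 := Complex.finrank_real_complex
  rw [hdim]
  have hball : (volume (Metric.ball (0:ℂ) 1)).toReal = π := by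
    simp [Complex.volume_ball]
  have h3 : ∫ y in Set.Ioi (0:ℝ), y ^ (2 - 1) • Set.indicator (Set.Ioc r R) (fun y => (y ^ 2)⁻¹) y
      = Real.log (R / r) := by
    rw [MeasureTheory.setIntegral_congr_fun measurableSet_Ioi
      (g := fun y : ℝ => Set.indicator (Set.Ioc r R) (fun y => y⁻¹) y) ?_]
    · rw [MeasureTheory.integral_indicator measurableSet_Ioc,
        Measure.restrict_restrict measurableSet_Ioc,
        show Set.Ioc r R ∩ Set.Ioi 0 = Set.Ioc r R from
          Set.inter_eq_left.2 (fun y hy => lt_trans hr hy.1),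
        ← intervalIntegral.integral_of_le hR, integral_inv_of_pos hr (lt_of_lt_of_le hr hR)]
    · intro y hy
      by_cases h : y ∈ Set.Ioc r R
      · have hy0 : (0:ℝ) < y := lt_trans hr h.1
        simp [h, smul_eq_mul, sq, mul_inv, ← mul_assoc, mul_inv_cancel₀ hy0.ne']
      · simp [h]
  rw [h3, measureReal_def, hball, nsmul_eq_mul, smul_eq_mul]
  ring

lemma integrable_of_ann_bound {f : ℂ → ℂ} (hm : AEStronglyMeasurable f volume)
    {r R M : ℝ} (hr : 0 < r)
    (hbd : ∀ u, ‖f u‖ ≤ M * annFun r R u) : Integrable f :=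
  ((annFun_integrable r R hr).const_mul M).mono' hm (ae_of_all _ hbd)

lemma norm_integral_le_ann {f : ℂ → ℂ} {r R M : ℝ} (hr : 0 < r) (hR : r ≤ R)
    (hbd : ∀ u, ‖f u‖ ≤ M * annFun r R u) :
    ‖∫ u : ℂ, f u‖ ≤ M * (2 * π * Real.log (R / r)) := by
  calc ‖∫ u : ℂ, f u‖ ≤ ∫ u : ℂ, M * annFun r R u :=
        norm_integral_le_of_norm_le ((annFun_integrable r R hr).const_mul M) (ae_of_all _ hbd)
    _ = M * ∫ u : ℂ, annFun r R u := MeasureTheory.integral_const_mul _ _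
    _ = M * (2 * π * Real.log (R / r)) := by rw [annFun_integral r R hr hR]

lemma diff_ind_mul_eq (r₁ r₂ : ℝ) (h : r₁ ≤ r₂) :
    (fun u : ℂ => ((if r₁ < ‖u‖ then (1:ℝ) else 0) - (if r₂ < ‖u‖ then (1:ℝ) else 0))
        * (‖u‖ ^ 2)⁻¹)
      = annFun r₁ r₂ := by
  funext u; unfold annFun
  by_cases h1 : r₁ < ‖u‖ <;> by_cases h2 : r₂ < ‖u‖
  · rw [if_pos h1, if_pos h2, if_neg (fun hc => absurd hc.2 (not_le.mpr h2))]; ring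
  · rw [if_pos h1, if_neg h2, if_pos ⟨h1, not_lt.mp h2⟩]; ring
  · exact absurd (lt_of_le_of_lt h h2) h1
  · rw [if_neg h1, if_neg h2, if_neg (fun hc => absurd hc.1 h1)]; ring

lemma diff_ind_neg_eq (r₁ r₂ : ℝ) (h : r₂ ≤ r₁) :
    (fun u : ℂ => ((if r₁ < ‖u‖ then (1:ℝ) else 0) - (if r₂ < ‖u‖ then (1:ℝ) else 0))
        * (‖u‖ ^ 2)⁻¹)
      = fun u => -(annFun r₂ r₁ u) := by
  funext u; rw [← congrFun (diff_ind_mul_eq r₂ r₁ h) u]; ring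

lemma diff_ind_integrable (r₁ r₂ : ℝ) (h₁ : 0 < r₁) (h₂ : 0 < r₂) :
    Integrable (fun u : ℂ =>
      ((if r₁ < ‖u‖ then (1:ℝ) else 0) - (if r₂ < ‖u‖ then (1:ℝ) else 0)) * (‖u‖ ^ 2)⁻¹) := by
  rcases le_total r₁ r₂ with h | h
  · rw [diff_ind_mul_eq r₁ r₂ h]; exact annFun_integrable _ _ h₁
  · rw [diff_ind_neg_eq r₁ r₂ h]; exact (annFun_integrable _ _ h₂).neg

lemma diff_ind_integral (r₁ r₂ : ℝ) (h₁ : 0 < r₁) (h₂ : 0 < r₂) :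
    ∫ u : ℂ, ((if r₁ < ‖u‖ then (1:ℝ) else 0) - (if r₂ < ‖u‖ then (1:ℝ) else 0)) * (‖u‖ ^ 2)⁻¹
      = 2 * π * Real.log (r₂ / r₁) := by
  rcases le_total r₁ r₂ with h | h
  · rw [diff_ind_mul_eq r₁ r₂ h]; exact annFun_integral _ _ h₁ h
  · rw [diff_ind_neg_eq r₁ r₂ h, integral_neg, annFun_integral _ _ h₂ h,
      Real.log_div h₂.ne' h₁.ne', Real.log_div h₁.ne' h₂.ne']
    ring

lemma abs_ite_sub_le (p q : Prop) [Decidable p] [Decidable q] :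
    |(if p then (1:ℝ) else 0) - (if q then (1:ℝ) else 0)| ≤ 1 := by
  split_ifs <;> norm_num

lemma meas_ind_m (ℓ : ℂ → ℝ) (hc : Continuous ℓ) (z : ℂ) (ε : ℝ) :
    Measurable fun u : ℂ => (if ε * (ℓ z + ℓ (z + u)) / 2 < ‖u‖ then (1:ℝ) else 0) := by
  refine Measurable.ite ?_ measurable_const measurable_const
  have hcont : Continuous fun u : ℂ => ε * (ℓ z + ℓ (z + u)) / 2 :=
    (continuous_const.mul (continuous_const.add
      (hc.comp (continuous_const.add continuous_id)))).div_const 2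
  exact (isOpen_lt hcont continuous_norm).measurableSet

lemma meas_ind_r (r : ℝ) : Measurable fun u : ℂ => (if r < ‖u‖ then (1:ℝ) else 0) :=
  Measurable.ite (isOpen_lt continuous_const continuous_norm).measurableSet
    measurable_const measurable_const

set_option maxHeartbeats 1000000 in
lemma core_limit (ℓ : ℂ → ℝ) (hc : Continuous ℓ) (C : ℝ) (hb : ∀ w, ℓ w ≤ C)
    (hp : ∀ w, 0 < ℓ w) (ψ : ℂ → ℂ) (hψ : Continuous ψ) (z : ℂ) :
    Tendsto (fun ε : ℝ => ∫ u : ℂ,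
        Complex.ofReal ((if ε * (ℓ z + ℓ (z + u)) / 2 < ‖u‖ then (1:ℝ) else 0)
            - (if ε < ‖u‖ then (1:ℝ) else 0)) * ψ u * Complex.ofReal ((‖u‖ ^ 2)⁻¹))
      (nhdsWithin 0 (Set.Ioi 0))
      (nhds (Complex.ofReal (-(2 * π) * Real.log (ℓ z)) * ψ 0)) := by
  have hL : 0 < ℓ z := hp z
  have hC : 0 < C := lt_of_lt_of_le hL (hb z)
  rw [Metric.tendsto_nhdsWithin_nhds]
  intro η hη
  have hψ0 : (0:ℝ) < ‖ψ 0‖ + 1 := by positivity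
  set κ : ℝ := min (ℓ z / 2) (η * ℓ z / (24 * π * (‖ψ 0‖ + 1))) with hκdef
  have hκpos : 0 < κ := lt_min (by positivity) (by positivity)
  have hκL : κ ≤ ℓ z / 2 := min_le_left _ _
  have hκη : κ ≤ η * ℓ z / (24 * π * (‖ψ 0‖ + 1)) := min_le_right _ _
  have hLκ : 0 < ℓ z - κ := by linarith
  set R : ℝ := max (C + ℓ z) 1 with hRdef
  have hR1 : (1:ℝ) ≤ R := le_max_right _ _
  have hRpos : 0 < R := lt_of_lt_of_le one_pos hR1
  have hCR : C ≤ R := le_trans (by linarith) (le_max_left _ _)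
  have hLκR : ℓ z + κ ≤ R := le_trans (by linarith [hb z]) (le_max_left _ _)
  set c₀ : ℝ := min (ℓ z - κ) 1 with hcdef
  have hc₀pos : 0 < c₀ := lt_min hLκ one_pos
  have hc₀1 : c₀ ≤ 1 := min_le_right _ _
  have hc₀Lκ : c₀ ≤ ℓ z - κ := min_le_left _ _
  have hc₀R : c₀ ≤ R := le_trans hc₀1 hR1
  set B : ℝ := 2 * π * Real.log (R / c₀) with hBdef
  have hB0 : 0 ≤ B := by
    have h1 : (1:ℝ) ≤ R / c₀ := (one_le_div hc₀pos).2 hc₀R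
    have h2 : 0 ≤ Real.log (R / c₀) := Real.log_nonneg h1
    positivity
  set τ : ℝ := η / (3 * (B + 1)) with hτdef
  have hτpos : 0 < τ := by positivity
  obtain ⟨δ₁, hδ₁pos, hδ₁⟩ := Metric.continuous_iff.mp hψ 0 τ hτpos
  have hcont : Continuous fun u : ℂ => ℓ (z + u) := hc.comp (continuous_const.add continuous_id)
  obtain ⟨δ₂, hδ₂pos, hδ₂⟩ := Metric.continuous_iff.mp hcont 0 κ hκpos
  set δ : ℝ := min δ₁ δ₂ with hδdef
  have hδpos : 0 < δ := lt_min hδ₁pos hδ₂pos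
  refine ⟨δ / R, by positivity, ?_⟩
  intro ε hεIoi hdist
  have hε0 : 0 < ε := hεIoi
  have hεR : ε * R < δ := by
    rw [Real.dist_eq, sub_zero, abs_of_pos hε0] at hdist
    calc ε * R < (δ / R) * R := mul_lt_mul_of_pos_right hdist hRpos
      _ = δ := div_mul_cancel₀ _ hRpos.ne'
  -- bounds on the variable radius
  have hm : ∀ u : ℂ, ‖u‖ < δ →
      ℓ z - κ ≤ (ℓ z + ℓ (z + u)) / 2 ∧ (ℓ z + ℓ (z + u)) / 2 ≤ ℓ z + κ := by
    intro u hu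
    have h1 : dist u 0 < δ₂ := by
      rw [dist_zero_right]; exact lt_of_lt_of_le hu (min_le_right _ _)
    have h2 := hδ₂ u h1
    rw [Real.dist_eq] at h2
    have h3 : |ℓ (z + u) - ℓ z| < κ := by simpa using h2
    obtain ⟨h4, h5⟩ := abs_lt.mp h3
    constructor <;> linarith
  -- support of the indicator difference
  have hsupp : ∀ u : ℂ,
      ((if ε * (ℓ z + ℓ (z + u)) / 2 < ‖u‖ then (1:ℝ) else 0)
        - (if ε < ‖u‖ then (1:ℝ) else 0)) ≠ 0 →
      ε * c₀ < ‖u‖ ∧ ‖u‖ ≤ ε * R := by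
    intro u hne
    by_cases hu : ‖u‖ < δ
    · obtain ⟨hm1, hm2⟩ := hm u hu
      by_cases h1 : ε * (ℓ z + ℓ (z + u)) / 2 < ‖u‖ <;> by_cases h2 : ε < ‖u‖
      · exact absurd (by rw [if_pos h1, if_pos h2]; ring) hne
      · refine ⟨?_, ?_⟩
        · calc ε * c₀ ≤ ε * (ℓ z + ℓ (z + u)) / 2 := by
                rw [mul_div_assoc]
                exact mul_le_mul_of_nonneg_left (le_trans hc₀Lκ hm1) hε0.le
            _ < ‖u‖ := h1
        · calc ‖u‖ ≤ ε := not_lt.mp h2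
            _ ≤ ε * R := le_mul_of_one_le_right hε0.le hR1
      · refine ⟨?_, ?_⟩
        · calc ε * c₀ ≤ ε * 1 := mul_le_mul_of_nonneg_left hc₀1 hε0.le
            _ = ε := mul_one ε
            _ < ‖u‖ := h2
        · calc ‖u‖ ≤ ε * (ℓ z + ℓ (z + u)) / 2 := not_lt.mp h1
            _ ≤ ε * R := by
                rw [mul_div_assoc]
                exact mul_le_mul_of_nonneg_left (le_trans hm2 hLκR) hε0.le
      · exact absurd (by rw [if_neg h1, if_neg h2]; ring) hne
    · exfalso
      apply hne
      push_neg at hu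
      have h1 : ε * (ℓ z + ℓ (z + u)) / 2 < ‖u‖ := by
        have hx : (ℓ z + ℓ (z + u)) / 2 ≤ R := by linarith [hb z, hb (z + u)]
        calc ε * (ℓ z + ℓ (z + u)) / 2 ≤ ε * R := by
              rw [mul_div_assoc]
              exact mul_le_mul_of_nonneg_left hx hε0.le
          _ < δ := hεR
          _ ≤ ‖u‖ := hu
      have h2 : ε < ‖u‖ := by
        calc ε = ε * 1 := (mul_one ε).symm
          _ ≤ ε * R := mul_le_mul_of_nonneg_left hR1 hε0.le
          _ < δ := hεR
          _ ≤ ‖u‖ := hu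
      rw [if_pos h1, if_pos h2]; ring
  -- sandwich of the variable indicator between fixed-radius ones
  have hsand : ∀ u : ℂ,
      ((if ε * (ℓ z + κ) < ‖u‖ then (1:ℝ) else 0)
          ≤ (if ε * (ℓ z + ℓ (z + u)) / 2 < ‖u‖ then (1:ℝ) else 0))
      ∧ ((if ε * (ℓ z + ℓ (z + u)) / 2 < ‖u‖ then (1:ℝ) else 0)
          ≤ (if ε * (ℓ z - κ) < ‖u‖ then (1:ℝ) else 0)) := by
    intro u
    by_cases hu : ‖u‖ < δ
    · obtain ⟨hm1, hm2⟩ := hm u hu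
      constructor
      · by_cases h1 : ε * (ℓ z + κ) < ‖u‖
        · rw [if_pos h1, if_pos (lt_of_le_of_lt (by
            rw [mul_div_assoc]
            exact mul_le_mul_of_nonneg_left hm2 hε0.le) h1)]
        · rw [if_neg h1]; split <;> norm_num
      · by_cases h1 : ε * (ℓ z + ℓ (z + u)) / 2 < ‖u‖
        · rw [if_pos h1, if_pos (lt_of_le_of_lt (by
            rw [mul_div_assoc]
            exact mul_le_mul_of_nonneg_left hm1 hε0.le) h1)]
        · rw [if_neg h1]; split <;> norm_num
    · push_neg at hu
      have hall : ∀ x : ℝ, x ≤ R → ε * x < ‖u‖ := fun x hx => by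
        calc ε * x ≤ ε * R := mul_le_mul_of_nonneg_left hx hε0.le
          _ < δ := hεR
          _ ≤ ‖u‖ := hu
      have h2 : ε * (ℓ z + ℓ (z + u)) / 2 < ‖u‖ := by
        have hx : (ℓ z + ℓ (z + u)) / 2 ≤ R := by linarith [hb z, hb (z + u)]
        have h3 := hall _ hx
        rwa [← mul_div_assoc] at h3
      constructor
      · rw [if_pos (hall _ hLκR), if_pos h2]
      · rw [if_pos h2, if_pos (hall _ (show ℓ z - κ ≤ R by linarith))]
  -- the real inner integral A
  set A : ℝ := ∫ u : ℂ,
      ((if ε * (ℓ z + ℓ (z + u)) / 2 < ‖u‖ then (1:ℝ) else 0)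
        - (if ε < ‖u‖ then (1:ℝ) else 0)) * (‖u‖ ^ 2)⁻¹ with hAdef
  have hDw_meas : Measurable (fun u : ℂ =>
      ((if ε * (ℓ z + ℓ (z + u)) / 2 < ‖u‖ then (1:ℝ) else 0)
        - (if ε < ‖u‖ then (1:ℝ) else 0)) * (‖u‖ ^ 2)⁻¹) :=
    ((meas_ind_m ℓ hc z ε).sub (meas_ind_r ε)).mul ((measurable_norm.pow_const 2).inv)
  have hDw_bd : ∀ u : ℂ,
      ‖((if ε * (ℓ z + ℓ (z + u)) / 2 < ‖u‖ then (1:ℝ) else 0)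
        - (if ε < ‖u‖ then (1:ℝ) else 0)) * (‖u‖ ^ 2)⁻¹‖ ≤ annFun (ε * c₀) (ε * R) u := by
    intro u
    by_cases hz : ((if ε * (ℓ z + ℓ (z + u)) / 2 < ‖u‖ then (1:ℝ) else 0)
        - (if ε < ‖u‖ then (1:ℝ) else 0)) = 0
    · rw [hz, zero_mul, norm_zero]; exact annFun_nonneg _ _ _
    · obtain ⟨hlo, hhi⟩ := hsupp u hz
      rw [show annFun (ε * c₀) (ε * R) u = (‖u‖ ^ 2)⁻¹ from by
        unfold annFun; rw [if_pos ⟨hlo, hhi⟩]]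
      rw [norm_mul]
      have h1 : ‖(if ε * (ℓ z + ℓ (z + u)) / 2 < ‖u‖ then (1:ℝ) else 0)
          - (if ε < ‖u‖ then (1:ℝ) else 0)‖ ≤ 1 := by
        rw [Real.norm_eq_abs]; exact abs_ite_sub_le _ _
      have h2 : ‖((‖u‖:ℝ) ^ 2)⁻¹‖ = (‖u‖ ^ 2)⁻¹ := Real.norm_of_nonneg (by positivity)
      calc _ ≤ 1 * ‖((‖u‖:ℝ) ^ 2)⁻¹‖ := mul_le_mul_of_nonneg_right h1 (norm_nonneg _)
        _ = (‖u‖ ^ 2)⁻¹ := by rw [one_mul, h2]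
  have hDw_int : Integrable (fun u : ℂ =>
      ((if ε * (ℓ z + ℓ (z + u)) / 2 < ‖u‖ then (1:ℝ) else 0)
        - (if ε < ‖u‖ then (1:ℝ) else 0)) * (‖u‖ ^ 2)⁻¹) :=
    (annFun_integrable _ _ (by positivity)).mono' hDw_meas.aestronglyMeasurable
      (ae_of_all _ hDw_bd)
  -- sandwich the integral A
  have hlow := integral_mono (diff_ind_integrable (ε * (ℓ z + κ)) ε (by positivity) hε0)
    hDw_int (fun u => mul_le_mul_of_nonneg_right (sub_le_sub_right (hsand u).1 _)
      (by positivity))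
  have hhigh := integral_mono hDw_int (diff_ind_integrable (ε * (ℓ z - κ)) ε (by positivity) hε0)
    (fun u => mul_le_mul_of_nonneg_right (sub_le_sub_right (hsand u).2 _) (by positivity))
  rw [diff_ind_integral _ _ (by positivity) hε0] at hlow
  rw [diff_ind_integral _ _ (by positivity) hε0] at hhigh
  rw [div_mul_cancel_left₀ hε0.ne', Real.log_inv] at hlow hhigh
  -- |A + 2π log L| bound
  have hlog1 : Real.log (ℓ z - κ) ≤ Real.log (ℓ z) := Real.log_le_log hLκ (by linarith)
  have hlog2 : Real.log (ℓ z) ≤ Real.log (ℓ z + κ) := Real.log_le_log hL (by linarith)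
  have hloggap : Real.log (ℓ z + κ) - Real.log (ℓ z - κ) ≤ 4 * κ / ℓ z := by
    have h1 : Real.log (ℓ z + κ) - Real.log (ℓ z - κ)
        = Real.log ((ℓ z + κ) / (ℓ z - κ)) := (Real.log_div (by linarith) (by linarith)).symm
    rw [h1]
    have h2 := Real.log_le_sub_one_of_pos (show 0 < (ℓ z + κ) / (ℓ z - κ) by positivity)
    have h3 : (ℓ z + κ) / (ℓ z - κ) - 1 = 2 * κ / (ℓ z - κ) := by
      field_simp
      ring
    have h4 : 2 * κ / (ℓ z - κ) ≤ 4 * κ / ℓ z := by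
      rw [div_le_div_iff₀ hLκ hL]
      linarith only [mul_le_mul_of_nonneg_left hκL (by positivity : (0:ℝ) ≤ 4 * κ), hκpos, hL]
    linarith
  have hπ := Real.pi_pos
  have e1 : 2 * π * Real.log (ℓ z - κ) ≤ 2 * π * Real.log (ℓ z) :=
    mul_le_mul_of_nonneg_left hlog1 (by positivity)
  have e2 : 2 * π * Real.log (ℓ z) ≤ 2 * π * Real.log (ℓ z + κ) :=
    mul_le_mul_of_nonneg_left hlog2 (by positivity)
  have hgap2 : 2 * π * (Real.log (ℓ z + κ) - Real.log (ℓ z - κ)) ≤ 2 * π * (4 * κ / ℓ z) :=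
    mul_le_mul_of_nonneg_left hloggap (by positivity)
  have hA : |A - (-(2 * π) * Real.log (ℓ z))| ≤ 2 * π * (4 * κ / ℓ z) := by
    rw [abs_le]
    constructor
    · linarith only [hlow, e1, e2, hgap2]
    · linarith only [hhigh, e1, e2, hgap2]
  have hfirst : ‖ψ 0‖ * (2 * π * (4 * κ / ℓ z)) ≤ η / 3 := by
    have h24 : κ * (24 * π * (‖ψ 0‖ + 1)) ≤ η * ℓ z := by
      have h := hκη
      rw [le_div_iff₀ (by positivity)] at h
      linarith
    rw [show ‖ψ 0‖ * (2 * π * (4 * κ / ℓ z)) = 8 * π * κ * ‖ψ 0‖ / ℓ z by ring,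
      div_le_div_iff₀ hL (by norm_num : (0:ℝ) < 3)]
    have hps : 0 ≤ 24 * (π * κ) := by positivity
    linarith only [h24, hps, mul_nonneg (mul_nonneg Real.pi_pos.le hκpos.le) (norm_nonneg (ψ 0))]
  -- split the complex integral
  have hsplitfun : (fun u : ℂ =>
      Complex.ofReal ((if ε * (ℓ z + ℓ (z + u)) / 2 < ‖u‖ then (1:ℝ) else 0)
          - (if ε < ‖u‖ then (1:ℝ) else 0)) * ψ u * Complex.ofReal ((‖u‖ ^ 2)⁻¹))
      = fun u : ℂ =>
        ψ 0 * Complex.ofReal ((((if ε * (ℓ z + ℓ (z + u)) / 2 < ‖u‖ then (1:ℝ) else 0)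
            - (if ε < ‖u‖ then (1:ℝ) else 0))) * (‖u‖ ^ 2)⁻¹)
        + Complex.ofReal ((if ε * (ℓ z + ℓ (z + u)) / 2 < ‖u‖ then (1:ℝ) else 0)
            - (if ε < ‖u‖ then (1:ℝ) else 0)) * (ψ u - ψ 0)
          * Complex.ofReal ((‖u‖ ^ 2)⁻¹) := by
    funext u; push_cast; ring
  have hg_int : Integrable (fun u : ℂ =>
      ψ 0 * Complex.ofReal ((((if ε * (ℓ z + ℓ (z + u)) / 2 < ‖u‖ then (1:ℝ) else 0)
          - (if ε < ‖u‖ then (1:ℝ) else 0))) * (‖u‖ ^ 2)⁻¹)) :=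
    (hDw_int.ofReal (𝕜 := ℂ)).const_mul (ψ 0)
  have he_meas : AEStronglyMeasurable (fun u : ℂ =>
      Complex.ofReal ((if ε * (ℓ z + ℓ (z + u)) / 2 < ‖u‖ then (1:ℝ) else 0)
          - (if ε < ‖u‖ then (1:ℝ) else 0)) * (ψ u - ψ 0)
        * Complex.ofReal ((‖u‖ ^ 2)⁻¹)) volume := by
    refine Measurable.aestronglyMeasurable ?_
    exact ((Complex.measurable_ofReal.comp
        ((meas_ind_m ℓ hc z ε).sub (meas_ind_r ε))).mul
        ((hψ.measurable).sub measurable_const)).mul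
      (Complex.measurable_ofReal.comp ((measurable_norm.pow_const 2).inv))
  have he_bd : ∀ u : ℂ,
      ‖Complex.ofReal ((if ε * (ℓ z + ℓ (z + u)) / 2 < ‖u‖ then (1:ℝ) else 0)
          - (if ε < ‖u‖ then (1:ℝ) else 0)) * (ψ u - ψ 0)
        * Complex.ofReal ((‖u‖ ^ 2)⁻¹)‖ ≤ τ * annFun (ε * c₀) (ε * R) u := by
    intro u
    by_cases hz : ((if ε * (ℓ z + ℓ (z + u)) / 2 < ‖u‖ then (1:ℝ) else 0)
        - (if ε < ‖u‖ then (1:ℝ) else 0)) = 0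
    · rw [hz]
      simp only [Complex.ofReal_zero, zero_mul, norm_zero]
      exact mul_nonneg hτpos.le (annFun_nonneg _ _ _)
    · obtain ⟨hlo, hhi⟩ := hsupp u hz
      have hball : dist u 0 < δ₁ := by
        rw [dist_zero_right]
        exact lt_of_le_of_lt hhi (lt_of_lt_of_le hεR (min_le_left _ _))
      have hψu : ‖ψ u - ψ 0‖ ≤ τ := by
        have := hδ₁ u hball
        rw [dist_eq_norm] at this
        exact this.le
      rw [show annFun (ε * c₀) (ε * R) u = (‖u‖ ^ 2)⁻¹ from by
        unfold annFun; rw [if_pos ⟨hlo, hhi⟩]]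
      rw [norm_mul, norm_mul, Complex.norm_real, Complex.norm_real,
        Real.norm_of_nonneg (show (0:ℝ) ≤ (‖u‖ ^ 2)⁻¹ by positivity)]
      have h1 : |(if ε * (ℓ z + ℓ (z + u)) / 2 < ‖u‖ then (1:ℝ) else 0)
          - (if ε < ‖u‖ then (1:ℝ) else 0)| ≤ 1 := abs_ite_sub_le _ _
      calc |(if ε * (ℓ z + ℓ (z + u)) / 2 < ‖u‖ then (1:ℝ) else 0)
            - (if ε < ‖u‖ then (1:ℝ) else 0)| * ‖ψ u - ψ 0‖ * (‖u‖ ^ 2)⁻¹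
          ≤ 1 * τ * (‖u‖ ^ 2)⁻¹ := by
            refine mul_le_mul_of_nonneg_right ?_ (by positivity)
            exact mul_le_mul h1 hψu (norm_nonneg _) zero_le_one
        _ = τ * (‖u‖ ^ 2)⁻¹ := by ring
  have he_int : Integrable (fun u : ℂ =>
      Complex.ofReal ((if ε * (ℓ z + ℓ (z + u)) / 2 < ‖u‖ then (1:ℝ) else 0)
          - (if ε < ‖u‖ then (1:ℝ) else 0)) * (ψ u - ψ 0)
        * Complex.ofReal ((‖u‖ ^ 2)⁻¹)) :=
    integrable_of_ann_bound he_meas (by positivity) he_bd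
  have hE : ‖∫ u : ℂ, Complex.ofReal ((if ε * (ℓ z + ℓ (z + u)) / 2 < ‖u‖ then (1:ℝ) else 0)
          - (if ε < ‖u‖ then (1:ℝ) else 0)) * (ψ u - ψ 0)
        * Complex.ofReal ((‖u‖ ^ 2)⁻¹)‖ ≤ τ * B := by
    have h := norm_integral_le_ann (M := τ) (by positivity : (0:ℝ) < ε * c₀)
      (mul_le_mul_of_nonneg_left hc₀R hε0.le) he_bd
    rwa [show ε * R / (ε * c₀) = R / c₀ from mul_div_mul_left R c₀ hε0.ne'] at h
  have hEτ : τ * B ≤ η / 3 := by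
    rw [hτdef, div_mul_eq_mul_div, div_le_div_iff₀ (by positivity) (by norm_num : (0:ℝ) < 3)]
    linarith only [hB0, hη.le, mul_nonneg hη.le hB0]
  -- put everything together
  have hIof : (∫ u : ℂ, Complex.ofReal ((((if ε * (ℓ z + ℓ (z + u)) / 2 < ‖u‖ then (1:ℝ) else 0)
      - (if ε < ‖u‖ then (1:ℝ) else 0))) * (‖u‖ ^ 2)⁻¹)) = Complex.ofReal A := by
    rw [hAdef]; exact integral_ofReal
  rw [hsplitfun, integral_add hg_int he_int, MeasureTheory.integral_const_mul, hIof]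
  rw [Complex.dist_eq]
  have hsplit2 : ψ 0 * Complex.ofReal A
        + (∫ u : ℂ, Complex.ofReal ((if ε * (ℓ z + ℓ (z + u)) / 2 < ‖u‖ then (1:ℝ) else 0)
            - (if ε < ‖u‖ then (1:ℝ) else 0)) * (ψ u - ψ 0) * Complex.ofReal ((‖u‖ ^ 2)⁻¹))
        - Complex.ofReal (-(2 * π) * Real.log (ℓ z)) * ψ 0
      = ψ 0 * (Complex.ofReal A - Complex.ofReal (-(2 * π) * Real.log (ℓ z)))
        + (∫ u : ℂ, Complex.ofReal ((if ε * (ℓ z + ℓ (z + u)) / 2 < ‖u‖ then (1:ℝ) else 0)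
            - (if ε < ‖u‖ then (1:ℝ) else 0)) * (ψ u - ψ 0)
          * Complex.ofReal ((‖u‖ ^ 2)⁻¹)) := by ring
  rw [hsplit2]
  calc ‖ψ 0 * (Complex.ofReal A - Complex.ofReal (-(2 * π) * Real.log (ℓ z)))
        + (∫ u : ℂ, Complex.ofReal ((if ε * (ℓ z + ℓ (z + u)) / 2 < ‖u‖ then (1:ℝ) else 0)
            - (if ε < ‖u‖ then (1:ℝ) else 0)) * (ψ u - ψ 0)
          * Complex.ofReal ((‖u‖ ^ 2)⁻¹))‖
      ≤ ‖ψ 0 * (Complex.ofReal A - Complex.ofReal (-(2 * π) * Real.log (ℓ z)))‖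
        + ‖∫ u : ℂ, Complex.ofReal ((if ε * (ℓ z + ℓ (z + u)) / 2 < ‖u‖ then (1:ℝ) else 0)
            - (if ε < ‖u‖ then (1:ℝ) else 0)) * (ψ u - ψ 0)
          * Complex.ofReal ((‖u‖ ^ 2)⁻¹)‖ := norm_add_le _ _
    _ ≤ η / 3 + η / 3 := by
        gcongr
        · rw [norm_mul, ← Complex.ofReal_sub, Complex.norm_real, Real.norm_eq_abs]
          calc ‖ψ 0‖ * |A - -(2 * π) * Real.log (ℓ z)|
              ≤ ‖ψ 0‖ * (2 * π * (4 * κ / ℓ z)) :=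
                mul_le_mul_of_nonneg_left hA (norm_nonneg _)
            _ ≤ η / 3 := hfirst
        · exact le_trans hE hEτ
    _ < η := by linarith


lemma piece_int (ℓ : ℂ → ℝ) (hc : Continuous ℓ) (C : ℝ) (hb : ∀ w, ℓ w ≤ C)
    (hp : ∀ w, 0 < ℓ w) (ψ : ℂ → ℂ) (hψ : Continuous ψ) (Mψ : ℝ)
    (hMψ : ∀ u, ‖ψ u‖ ≤ Mψ) (z : ℂ) (ε : ℝ) (hε : 0 < ε) :
    Integrable (fun u : ℂ =>
      Complex.ofReal ((if ε * (ℓ z + ℓ (z + u)) / 2 < ‖u‖ then (1:ℝ) else 0)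
        - (if ε < ‖u‖ then (1:ℝ) else 0)) * ψ u * Complex.ofReal ((‖u‖ ^ 2)⁻¹)) := by
  have hL := hp z
  have hC : 0 < C := lt_of_lt_of_le hL (hb z)
  have hMψ0 : 0 ≤ Mψ := le_trans (norm_nonneg _) (hMψ 0)
  set r : ℝ := ε * min (ℓ z / 2) 1 with hrdef
  set R : ℝ := ε * max C 1 with hRdef
  have hrpos : 0 < r := by positivity
  refine integrable_of_ann_bound ?_ hrpos (M := Mψ) (R := R) ?_
  · refine Measurable.aestronglyMeasurable ?_
    exact ((Complex.measurable_ofReal.comp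
        ((meas_ind_m ℓ hc z ε).sub (meas_ind_r ε))).mul hψ.measurable).mul
      (Complex.measurable_ofReal.comp ((measurable_norm.pow_const 2).inv))
  · intro u
    by_cases hd : ((if ε * (ℓ z + ℓ (z + u)) / 2 < ‖u‖ then (1:ℝ) else 0)
        - (if ε < ‖u‖ then (1:ℝ) else 0)) = 0
    · rw [hd]
      simp only [Complex.ofReal_zero, zero_mul, norm_zero]
      exact mul_nonneg hMψ0 (annFun_nonneg _ _ _)
    · have hann : r < ‖u‖ ∧ ‖u‖ ≤ R := by
        by_cases h1 : ε * (ℓ z + ℓ (z + u)) / 2 < ‖u‖ <;> by_cases h2 : ε < ‖u‖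
        · exact absurd (by rw [if_pos h1, if_pos h2]; ring) hd
        · refine ⟨lt_of_le_of_lt ?_ h1, le_trans (not_lt.mp h2) ?_⟩
          · rw [hrdef, mul_div_assoc]
            refine mul_le_mul_of_nonneg_left ?_ hε.le
            have := hp (z + u)
            have h3 : min (ℓ z / 2) 1 ≤ ℓ z / 2 := min_le_left _ _
            linarith
          · rw [hRdef]
            exact le_mul_of_one_le_right hε.le (le_max_right _ _)
        · refine ⟨lt_of_le_of_lt ?_ h2, le_trans (not_lt.mp h1) ?_⟩
          · rw [hrdef]
            exact mul_le_of_le_one_right hε.le (min_le_right _ _)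
          · rw [hRdef, mul_div_assoc]
            refine mul_le_mul_of_nonneg_left ?_ hε.le
            have h3 : C ≤ max C 1 := le_max_left _ _
            linarith [hb z, hb (z + u)]
        · exact absurd (by rw [if_neg h1, if_neg h2]; ring) hd
      rw [show annFun r R u = (‖u‖ ^ 2)⁻¹ from by unfold annFun; rw [if_pos hann]]
      rw [norm_mul, norm_mul, Complex.norm_real, Complex.norm_real,
        Real.norm_of_nonneg (show (0:ℝ) ≤ (‖u‖ ^ 2)⁻¹ by positivity)]
      calc |(if ε * (ℓ z + ℓ (z + u)) / 2 < ‖u‖ then (1:ℝ) else 0)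
            - (if ε < ‖u‖ then (1:ℝ) else 0)| * ‖ψ u‖ * (‖u‖ ^ 2)⁻¹
          ≤ 1 * Mψ * (‖u‖ ^ 2)⁻¹ := by
            refine mul_le_mul_of_nonneg_right ?_ (by positivity)
            exact mul_le_mul (abs_ite_sub_le _ _) (hMψ u) (norm_nonneg _) zero_le_one
        _ = Mψ * (‖u‖ ^ 2)⁻¹ := by ring


set_option maxHeartbeats 1000000 in
/-- Coordinate form of the one-loop cutoff-dependence Lemma: the difference of the
regularized double integrals against a compactly supported test density `φ`
converges, as `ε → 0⁺`, to the boundary integral `-2π ∫ log(ℓ₁/ℓ₂) φ(·,0)`. -/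
theorem cutoff_difference_limit_with_density (ℓ₁ ℓ₂ : ℂ → ℝ)
    (h₁c : Continuous ℓ₁) (h₂c : Continuous ℓ₂)
    (h₁b : ∃ C, ∀ w, ℓ₁ w ≤ C) (h₂b : ∃ C, ∀ w, ℓ₂ w ≤ C)
    (h₁p : ∀ w, 0 < ℓ₁ w) (h₂p : ∀ w, 0 < ℓ₂ w)
    (φ : ℂ × ℂ → ℂ) (hφc : Continuous φ) (hφs : HasCompactSupport φ) :
    Tendsto
      (fun ε : ℝ =>
        ∫ z : ℂ, (∫ u : ℂ,
          Complex.ofReal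
              ((Set.indicator {p : ℂ × ℂ | ‖p.2‖ > ε * (ℓ₁ p.1 + ℓ₁ (p.1 + p.2)) / 2}
                (fun _ => (1 : ℝ)) (z, u))
              - (Set.indicator {p : ℂ × ℂ | ‖p.2‖ > ε * (ℓ₂ p.1 + ℓ₂ (p.1 + p.2)) / 2}
                (fun _ => (1 : ℝ)) (z, u)))
            * φ (z, u) * Complex.ofReal ((‖u‖ ^ 2)⁻¹) ∂volume) ∂volume)
      (nhdsWithin 0 (Set.Ioi 0))
      (nhds ((-(2 * π) : ℂ)
        * ∫ z : ℂ, Complex.ofReal (Real.log (ℓ₁ z / ℓ₂ z)) * φ (z, 0) ∂volume)) := by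
  have hrw1 : ∀ (ε : ℝ) (z u : ℂ),
      Set.indicator {p : ℂ × ℂ | ‖p.2‖ > ε * (ℓ₁ p.1 + ℓ₁ (p.1 + p.2)) / 2}
        (fun _ => (1 : ℝ)) (z, u)
      = (if ε * (ℓ₁ z + ℓ₁ (z + u)) / 2 < ‖u‖ then (1:ℝ) else 0) := by
    intro ε z u
    simp [Set.indicator_apply, Set.mem_setOf_eq, gt_iff_lt]
  have hrw2 : ∀ (ε : ℝ) (z u : ℂ),
      Set.indicator {p : ℂ × ℂ | ‖p.2‖ > ε * (ℓ₂ p.1 + ℓ₂ (p.1 + p.2)) / 2}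
        (fun _ => (1 : ℝ)) (z, u)
      = (if ε * (ℓ₂ z + ℓ₂ (z + u)) / 2 < ‖u‖ then (1:ℝ) else 0) := by
    intro ε z u
    simp [Set.indicator_apply, Set.mem_setOf_eq, gt_iff_lt]
  simp only [hrw1, hrw2]
  by_cases hKne : (tsupport φ).Nonempty
  swap
  · have hempty : tsupport φ = ∅ := Set.not_nonempty_iff_eq_empty.mp hKne
    have hφ0 : ∀ p : ℂ × ℂ, φ p = 0 := fun p =>
      image_eq_zero_of_notMem_tsupport (by simp [hempty])
    simp only [hφ0, mul_zero, zero_mul, integral_zero]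
    exact tendsto_const_nhds
  obtain ⟨C₁, hC₁⟩ := h₁b
  obtain ⟨C₂, hC₂⟩ := h₂b
  set C : ℝ := max C₁ C₂ with hCdef
  have hbC₁ : ∀ w, ℓ₁ w ≤ C := fun w => le_trans (hC₁ w) (le_max_left _ _)
  have hbC₂ : ∀ w, ℓ₂ w ≤ C := fun w => le_trans (hC₂ w) (le_max_right _ _)
  have hC : 0 < C := lt_of_lt_of_le (h₁p 0) (hbC₁ 0)
  set K₁ : Set ℂ := Prod.fst '' tsupport φ with hK₁def
  have hK₁c : IsCompact K₁ := hφs.image continuous_fst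
  have hK₁ne : K₁.Nonempty := hKne.image _
  obtain ⟨z₀, hz₀K, hz₀min⟩ := hK₁c.exists_isMinOn hK₁ne (h₁c.min h₂c).continuousOn
  set c₀ : ℝ := min (ℓ₁ z₀) (ℓ₂ z₀) / 2 with hc₀def
  have hc₀pos : 0 < c₀ := by
    have := lt_min (h₁p z₀) (h₂p z₀)
    positivity
  have hc₀K : ∀ z ∈ K₁, c₀ ≤ ℓ₁ z / 2 ∧ c₀ ≤ ℓ₂ z / 2 := by
    intro z hz
    have h := isMinOn_iff.mp hz₀min z hz
    constructor
    · have : min (ℓ₁ z) (ℓ₂ z) ≤ ℓ₁ z := min_le_left _ _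
      rw [hc₀def]; linarith
    · have : min (ℓ₁ z) (ℓ₂ z) ≤ ℓ₂ z := min_le_right _ _
      rw [hc₀def]; linarith
  have hc₀C : c₀ < C := by
    have h1 : min (ℓ₁ z₀) (ℓ₂ z₀) ≤ ℓ₁ z₀ := min_le_left _ _
    have h2 := h₁p z₀
    have h3 := hbC₁ z₀
    rw [hc₀def]; linarith
  obtain ⟨Mφ, hMφ⟩ := hφc.bounded_above_of_compact_support hφs
  have hMφ0 : 0 ≤ Mφ := le_trans (norm_nonneg _) (hMφ (0, 0))
  set M₀ : ℝ := Mφ * (2 * π * Real.log (C / c₀)) with hM₀def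
  rw [← MeasureTheory.integral_const_mul]
  refine MeasureTheory.tendsto_integral_filter_of_dominated_convergence
    (Set.indicator K₁ (fun _ => M₀)) ?_ ?_ ?_ ?_
  · -- measurability
    refine Eventually.of_forall (fun ε => ?_)
    have hS1 : MeasurableSet {p : ℂ × ℂ | ε * (ℓ₁ p.1 + ℓ₁ (p.1 + p.2)) / 2 < ‖p.2‖} := by
      refine (isOpen_lt ?_ continuous_snd.norm).measurableSet
      exact (continuous_const.mul ((h₁c.comp continuous_fst).add
        (h₁c.comp (continuous_fst.add continuous_snd)))).div_const 2
    have hS2 : MeasurableSet {p : ℂ × ℂ | ε * (ℓ₂ p.1 + ℓ₂ (p.1 + p.2)) / 2 < ‖p.2‖} := by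
      refine (isOpen_lt ?_ continuous_snd.norm).measurableSet
      exact (continuous_const.mul ((h₂c.comp continuous_fst).add
        (h₂c.comp (continuous_fst.add continuous_snd)))).div_const 2
    have hmeas : AEStronglyMeasurable (fun p : ℂ × ℂ =>
        Complex.ofReal ((if ε * (ℓ₁ p.1 + ℓ₁ (p.1 + p.2)) / 2 < ‖p.2‖ then (1:ℝ) else 0)
          - (if ε * (ℓ₂ p.1 + ℓ₂ (p.1 + p.2)) / 2 < ‖p.2‖ then (1:ℝ) else 0))
        * φ p * Complex.ofReal ((‖p.2‖ ^ 2)⁻¹))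
        ((volume : Measure ℂ).prod (volume : Measure ℂ)) := by
      refine Measurable.aestronglyMeasurable ?_
      refine Measurable.mul (Measurable.mul ?_ hφc.measurable) ?_
      · refine Complex.measurable_ofReal.comp (Measurable.sub ?_ ?_)
        · exact Measurable.ite hS1 measurable_const measurable_const
        · exact Measurable.ite hS2 measurable_const measurable_const
      · exact Complex.measurable_ofReal.comp ((measurable_snd.norm.pow_const 2).inv)
    exact hmeas.integral_prod_right'
  · -- uniform bound
    refine Eventually.mono self_mem_nhdsWithin (fun ε hε => ?_)
    have hε0 : (0:ℝ) < ε := hε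
    refine ae_of_all _ (fun z => ?_)
    by_cases hzK : z ∈ K₁
    · have hbd : ∀ u : ℂ,
          ‖Complex.ofReal ((if ε * (ℓ₁ z + ℓ₁ (z + u)) / 2 < ‖u‖ then (1:ℝ) else 0)
              - (if ε * (ℓ₂ z + ℓ₂ (z + u)) / 2 < ‖u‖ then (1:ℝ) else 0))
            * φ (z, u) * Complex.ofReal ((‖u‖ ^ 2)⁻¹)‖
          ≤ Mφ * annFun (ε * c₀) (ε * C) u := by
        intro u
        by_cases hd : ((if ε * (ℓ₁ z + ℓ₁ (z + u)) / 2 < ‖u‖ then (1:ℝ) else 0)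
            - (if ε * (ℓ₂ z + ℓ₂ (z + u)) / 2 < ‖u‖ then (1:ℝ) else 0)) = 0
        · rw [hd]
          simp only [Complex.ofReal_zero, zero_mul, norm_zero]
          exact mul_nonneg hMφ0 (annFun_nonneg _ _ _)
        · have hann : ε * c₀ < ‖u‖ ∧ ‖u‖ ≤ ε * C := by
            by_cases h1 : ε * (ℓ₁ z + ℓ₁ (z + u)) / 2 < ‖u‖ <;>
              by_cases h2 : ε * (ℓ₂ z + ℓ₂ (z + u)) / 2 < ‖u‖
            · exact absurd (by rw [if_pos h1, if_pos h2]; ring) hd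
            · refine ⟨lt_of_le_of_lt ?_ h1, le_trans (not_lt.mp h2) ?_⟩
              · rw [mul_div_assoc]
                refine mul_le_mul_of_nonneg_left ?_ hε0.le
                have h3 := (hc₀K z hzK).1
                have h4 := h₁p (z + u)
                linarith
              · rw [mul_div_assoc]
                refine mul_le_mul_of_nonneg_left ?_ hε0.le
                linarith [hbC₂ z, hbC₂ (z + u)]
            · refine ⟨lt_of_le_of_lt ?_ h2, le_trans (not_lt.mp h1) ?_⟩
              · rw [mul_div_assoc]
                refine mul_le_mul_of_nonneg_left ?_ hε0.le
                have h3 := (hc₀K z hzK).2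
                have h4 := h₂p (z + u)
                linarith
              · rw [mul_div_assoc]
                refine mul_le_mul_of_nonneg_left ?_ hε0.le
                linarith [hbC₁ z, hbC₁ (z + u)]
            · exact absurd (by rw [if_neg h1, if_neg h2]; ring) hd
          rw [show annFun (ε * c₀) (ε * C) u = (‖u‖ ^ 2)⁻¹ from by
            unfold annFun; rw [if_pos hann]]
          rw [norm_mul, norm_mul, Complex.norm_real, Complex.norm_real,
            Real.norm_of_nonneg (show (0:ℝ) ≤ (‖u‖ ^ 2)⁻¹ by positivity)]
          calc |(if ε * (ℓ₁ z + ℓ₁ (z + u)) / 2 < ‖u‖ then (1:ℝ) else 0)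
                - (if ε * (ℓ₂ z + ℓ₂ (z + u)) / 2 < ‖u‖ then (1:ℝ) else 0)|
                * ‖φ (z, u)‖ * (‖u‖ ^ 2)⁻¹
              ≤ 1 * Mφ * (‖u‖ ^ 2)⁻¹ := by
                refine mul_le_mul_of_nonneg_right ?_ (by positivity)
                exact mul_le_mul (abs_ite_sub_le _ _) (hMφ (z, u)) (norm_nonneg _) zero_le_one
            _ = Mφ * (‖u‖ ^ 2)⁻¹ := by ring
      have h := norm_integral_le_ann (M := Mφ) (by positivity)
        (mul_le_mul_of_nonneg_left hc₀C.le hε0.le) hbd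
      rw [show ε * C / (ε * c₀) = C / c₀ from mul_div_mul_left C c₀ hε0.ne'] at h
      rw [Set.indicator_of_mem hzK]
      exact h
    · have hφz : ∀ u : ℂ, φ (z, u) = 0 := fun u =>
        image_eq_zero_of_notMem_tsupport (fun hmem => hzK ⟨(z, u), hmem, rfl⟩)
      have hzero : (fun u : ℂ =>
          Complex.ofReal ((if ε * (ℓ₁ z + ℓ₁ (z + u)) / 2 < ‖u‖ then (1:ℝ) else 0)
              - (if ε * (ℓ₂ z + ℓ₂ (z + u)) / 2 < ‖u‖ then (1:ℝ) else 0))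
            * φ (z, u) * Complex.ofReal ((‖u‖ ^ 2)⁻¹)) = fun _ => 0 := by
        funext u; rw [hφz u]; ring
      rw [hzero, integral_zero, norm_zero, Set.indicator_of_notMem hzK]
  · -- bound integrable
    rw [integrable_indicator_iff hK₁c.measurableSet]
    exact (integrableOn_const_iff).2 (Or.inr hK₁c.measure_lt_top)
  · -- pointwise limit
    refine ae_of_all _ (fun z => ?_)
    have hψc : Continuous fun u : ℂ => φ (z, u) := hφc.comp (Continuous.prodMk_right z)
    have h1 := core_limit ℓ₁ h₁c C hbC₁ h₁p (fun u => φ (z, u)) hψc z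
    have h2 := core_limit ℓ₂ h₂c C hbC₂ h₂p (fun u => φ (z, u)) hψc z
    beta_reduce at h1 h2
    have hsub := h1.sub h2
    have heq : (fun ε : ℝ =>
        (∫ u : ℂ, Complex.ofReal ((if ε * (ℓ₁ z + ℓ₁ (z + u)) / 2 < ‖u‖ then (1:ℝ) else 0)
            - (if ε < ‖u‖ then (1:ℝ) else 0)) * φ (z, u) * Complex.ofReal ((‖u‖ ^ 2)⁻¹))
        - (∫ u : ℂ, Complex.ofReal ((if ε * (ℓ₂ z + ℓ₂ (z + u)) / 2 < ‖u‖ then (1:ℝ) else 0)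
            - (if ε < ‖u‖ then (1:ℝ) else 0)) * φ (z, u) * Complex.ofReal ((‖u‖ ^ 2)⁻¹)))
        =ᶠ[nhdsWithin 0 (Set.Ioi 0)] (fun ε : ℝ =>
          ∫ u : ℂ, Complex.ofReal ((if ε * (ℓ₁ z + ℓ₁ (z + u)) / 2 < ‖u‖ then (1:ℝ) else 0)
            - (if ε * (ℓ₂ z + ℓ₂ (z + u)) / 2 < ‖u‖ then (1:ℝ) else 0))
            * φ (z, u) * Complex.ofReal ((‖u‖ ^ 2)⁻¹)) := by
      refine Eventually.mono self_mem_nhdsWithin (fun ε hε => ?_)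
      have hε0 : (0:ℝ) < ε := hε
      have hi1 := piece_int ℓ₁ h₁c C hbC₁ h₁p (fun u => φ (z, u)) hψc Mφ
        (fun u => hMφ (z, u)) z ε hε0
      have hi2 := piece_int ℓ₂ h₂c C hbC₂ h₂p (fun u => φ (z, u)) hψc Mφ
        (fun u => hMφ (z, u)) z ε hε0
      beta_reduce at hi1 hi2
      beta_reduce
      rw [← integral_sub hi1 hi2]
      congr 1
      funext u
      push_cast
      ring
    have hlim := (Tendsto.congr' heq hsub)
    have hval : Complex.ofReal (-(2 * π) * Real.log (ℓ₁ z)) * φ (z, 0)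
        - Complex.ofReal (-(2 * π) * Real.log (ℓ₂ z)) * φ (z, 0)
        = (-(2 * π) : ℂ) * (Complex.ofReal (Real.log (ℓ₁ z / ℓ₂ z)) * φ (z, 0)) := by
      rw [Real.log_div (h₁p z).ne' (h₂p z).ne']
      push_cast
      ring
    rwa [hval] at hlim
end

section
/- Let ℓ₁, ℓ₂ : ℂ → ℝ be continuous, bounded functions with ℓᵢ(w) > 0 for all w, and let φ : ℂ × ℂ → ℂ be continuous with compact support such that φ(z, 0) = 0 for every z ∈ ℂ. With χᵢ,ε the indicator of {(z,u) : ‖u‖ > ε·(ℓᵢ(z) + ℓᵢ(z + u))/2}, the double Lebesgue integral ∫_ℂ ∫_ℂ (χ₁,ε(z,u) − χ₂,ε(z,u)) · φ(z,u) · ‖u‖⁻² du dz tends to 0 as ε → 0⁺. -/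
open MeasureTheory Real Filter Set

set_option maxHeartbeats 1000000

/-- Densities vanishing on the diagonal do not contribute to the `ε → 0⁺` limit of the
cutoff-dependence of the regularized one-loop integrals. -/
theorem cutoff_difference_limit_vanishing_density (ℓ₁ ℓ₂ : ℂ → ℝ)
    (h₁c : Continuous ℓ₁) (h₂c : Continuous ℓ₂)
    (h₁b : ∃ C, ∀ w, ℓ₁ w ≤ C) (h₂b : ∃ C, ∀ w, ℓ₂ w ≤ C)
    (h₁p : ∀ w, 0 < ℓ₁ w) (h₂p : ∀ w, 0 < ℓ₂ w)
    (φ : ℂ × ℂ → ℂ) (hφc : Continuous φ) (hφs : HasCompactSupport φ)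
    (hφ0 : ∀ z : ℂ, φ (z, 0) = 0) :
    Tendsto
      (fun ε : ℝ =>
        ∫ z : ℂ, (∫ u : ℂ,
          Complex.ofReal
              ((Set.indicator {p : ℂ × ℂ | ‖p.2‖ > ε * (ℓ₁ p.1 + ℓ₁ (p.1 + p.2)) / 2}
                (fun _ => (1 : ℝ)) (z, u))
              - (Set.indicator {p : ℂ × ℂ | ‖p.2‖ > ε * (ℓ₂ p.1 + ℓ₂ (p.1 + p.2)) / 2}
                (fun _ => (1 : ℝ)) (z, u)))
            * φ (z, u) * Complex.ofReal ((‖u‖ ^ 2)⁻¹) ∂volume) ∂volume)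
      (nhdsWithin 0 (Set.Ioi 0))
      (nhds 0) := by
  rw [NormedAddCommGroup.tendsto_nhds_zero]
  intro δ' hδ'
  -- upper bound `C ≥ 1` for both `ℓ`s
  obtain ⟨C₁, hC₁⟩ := h₁b
  obtain ⟨C₂, hC₂⟩ := h₂b
  set C : ℝ := max 1 (max C₁ C₂) with hCdef
  have hC1 : (1 : ℝ) ≤ C := le_max_left _ _
  have hC0 : (0 : ℝ) < C := lt_of_lt_of_le one_pos hC1
  have hℓ₁C : ∀ w, ℓ₁ w ≤ C := fun w =>
    (hC₁ w).trans ((le_max_left _ _).trans (le_max_right _ _))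
  have hℓ₂C : ∀ w, ℓ₂ w ≤ C := fun w =>
    (hC₂ w).trans ((le_max_right _ _).trans (le_max_right _ _))
  -- radius `R > 0` containing the support of `φ`
  obtain ⟨R, hR1, hRsupp⟩ := hφs.isBounded.subset_closedBall_lt 1 0
  have hR0 : (0 : ℝ) < R := lt_trans one_pos hR1
  -- lower bound `c > 0` for both `ℓ`s on the relevant compact set
  obtain ⟨w₀, hw₀mem, hw₀⟩ :=
    (isCompact_closedBall (0 : ℂ) (2 * R)).exists_isMinOn
      ⟨0, Metric.mem_closedBall_self (by positivity)⟩
      ((h₁c.min h₂c).continuousOn)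
  set c : ℝ := min (ℓ₁ w₀) (ℓ₂ w₀) with hcdef
  have hc0 : 0 < c := lt_min (h₁p w₀) (h₂p w₀)
  have hcle : ∀ w ∈ Metric.closedBall (0 : ℂ) (2 * R), c ≤ ℓ₁ w ∧ c ≤ ℓ₂ w := by
    intro w hw
    have := hw₀ hw
    exact ⟨this.trans (min_le_left _ _), this.trans (min_le_right _ _)⟩
  -- volume constants
  set V : ℝ := (volume (Metric.closedBall (0 : ℂ) 1)).toReal with hVdef
  set W : ℝ := (volume (Metric.closedBall (0 : ℂ) R)).toReal with hWdef
  have hV0 : 0 ≤ V := ENNReal.toReal_nonneg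
  have hW0 : 0 ≤ W := ENNReal.toReal_nonneg
  set A : ℝ := C ^ 2 / c ^ 2 * V * W with hAdef
  have hA0 : 0 ≤ A := by positivity
  set δ : ℝ := δ' / (A + 1) with hδdef
  have hδ0 : 0 < δ := div_pos hδ' (by linarith)
  -- uniform continuity of φ
  have hφu : UniformContinuous φ := hφs.uniformContinuous_of_continuous hφc
  obtain ⟨η, hη0, hη⟩ := Metric.uniformContinuous_iff.1 hφu δ hδ0
  -- work with ε ∈ (0, η / C)
  filter_upwards [Ioo_mem_nhdsGT_of_mem
    (Set.mem_Ico.2 ⟨le_refl (0 : ℝ), div_pos hη0 hC0⟩)] with ε hε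
  obtain ⟨hε0, hεη⟩ := hε
  have hεC : ε * C < η := (lt_div_iff₀ hC0).1 hεη
  have hεC0 : 0 < ε * C := by positivity
  have hεc0 : 0 < ε * c := by positivity
  -- pointwise bound on the integrand
  have hpoint : ∀ z u : ℂ,
      ‖(Complex.ofReal
          ((Set.indicator {p : ℂ × ℂ | ‖p.2‖ > ε * (ℓ₁ p.1 + ℓ₁ (p.1 + p.2)) / 2}
            (fun _ => (1 : ℝ)) (z, u))
          - (Set.indicator {p : ℂ × ℂ | ‖p.2‖ > ε * (ℓ₂ p.1 + ℓ₂ (p.1 + p.2)) / 2}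
            (fun _ => (1 : ℝ)) (z, u)))
        * φ (z, u) * Complex.ofReal ((‖u‖ ^ 2)⁻¹))‖
      ≤ (Metric.closedBall (0 : ℂ) R).indicator
          (fun _ => (Metric.closedBall (0 : ℂ) (ε * C)).indicator
            (fun _ => δ * ((ε * c) ^ 2)⁻¹) u) z := by
    intro z u
    have hRHS0 : 0 ≤ (Metric.closedBall (0 : ℂ) R).indicator
        (fun _ => (Metric.closedBall (0 : ℂ) (ε * C)).indicator
          (fun _ => δ * ((ε * c) ^ 2)⁻¹) u) z := by
      apply Set.indicator_nonneg
      intro _ _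
      apply Set.indicator_nonneg
      intro _ _
      positivity
    by_cases hφzu : φ (z, u) = 0
    · simp [hφzu, hRHS0]
    -- (z,u) is in the support of φ
    have hmem : (z, u) ∈ Metric.closedBall (0 : ℂ × ℂ) R :=
      hRsupp (subset_tsupport φ (Function.mem_support.2 hφzu))
    have hnorm : max ‖z‖ ‖u‖ ≤ R := by
      have := mem_closedBall_zero_iff.1 hmem
      rwa [Prod.norm_def] at this
    have hz : ‖z‖ ≤ R := (le_max_left _ _).trans hnorm
    have hu : ‖u‖ ≤ R := (le_max_right _ _).trans hnorm
    have hzball : z ∈ Metric.closedBall (0 : ℂ) (2 * R) := by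
      rw [mem_closedBall_zero_iff]; linarith
    have hzuball : z + u ∈ Metric.closedBall (0 : ℂ) (2 * R) := by
      rw [mem_closedBall_zero_iff]
      calc ‖z + u‖ ≤ ‖z‖ + ‖u‖ := norm_add_le _ _
        _ ≤ 2 * R := by linarith
    have hcz := hcle z hzball
    have hczu := hcle (z + u) hzuball
    have hfinal : ∀ (_ : ε * c < ‖u‖) (_ : ‖u‖ ≤ ε * C)
        (_ : ‖(Complex.ofReal
          ((Set.indicator {p : ℂ × ℂ | ‖p.2‖ > ε * (ℓ₁ p.1 + ℓ₁ (p.1 + p.2)) / 2}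
            (fun _ => (1 : ℝ)) (z, u))
          - (Set.indicator {p : ℂ × ℂ | ‖p.2‖ > ε * (ℓ₂ p.1 + ℓ₂ (p.1 + p.2)) / 2}
            (fun _ => (1 : ℝ)) (z, u))))‖ ≤ 1),
        ‖(Complex.ofReal
          ((Set.indicator {p : ℂ × ℂ | ‖p.2‖ > ε * (ℓ₁ p.1 + ℓ₁ (p.1 + p.2)) / 2}
            (fun _ => (1 : ℝ)) (z, u))
          - (Set.indicator {p : ℂ × ℂ | ‖p.2‖ > ε * (ℓ₂ p.1 + ℓ₂ (p.1 + p.2)) / 2}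
            (fun _ => (1 : ℝ)) (z, u)))
        * φ (z, u) * Complex.ofReal ((‖u‖ ^ 2)⁻¹))‖
        ≤ (Metric.closedBall (0 : ℂ) R).indicator
          (fun _ => (Metric.closedBall (0 : ℂ) (ε * C)).indicator
            (fun _ => δ * ((ε * c) ^ 2)⁻¹) u) z := by
      intro hulb huub hcoef
      have huball : u ∈ Metric.closedBall (0 : ℂ) (ε * C) :=
        mem_closedBall_zero_iff.2 huub
      have hφsmall : ‖φ (z, u)‖ ≤ δ := by
        have hdist : dist ((z, u) : ℂ × ℂ) ((z, 0) : ℂ × ℂ) < η := by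
          rw [Prod.dist_eq]
          simp only [dist_self, dist_zero_right]
          calc max 0 ‖u‖ = ‖u‖ := max_eq_right (norm_nonneg u)
            _ ≤ ε * C := huub
            _ < η := hεC
        have := hη hdist
        rw [hφ0 z, dist_zero_right] at this
        exact this.le
      have hinv : (‖u‖ ^ 2)⁻¹ ≤ ((ε * c) ^ 2)⁻¹ := by
        apply inv_anti₀ (by positivity)
        nlinarith [norm_nonneg u]
      rw [Set.indicator_of_mem (mem_closedBall_zero_iff.2 hz),
        Set.indicator_of_mem huball]
      calc ‖_ * φ (z, u) * Complex.ofReal ((‖u‖ ^ 2)⁻¹)‖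
          = ‖(Complex.ofReal _)‖ * ‖φ (z, u)‖ * ‖(Complex.ofReal ((‖u‖ ^ 2)⁻¹))‖ := by
            rw [norm_mul, norm_mul]
        _ ≤ 1 * δ * ((ε * c) ^ 2)⁻¹ := by
            apply mul_le_mul
            · exact mul_le_mul hcoef hφsmall (norm_nonneg _) zero_le_one
            · rw [Complex.norm_real, Real.norm_eq_abs, abs_of_nonneg (by positivity)]
              exact hinv
            · exact norm_nonneg _
            · positivity
        _ = δ * ((ε * c) ^ 2)⁻¹ := by ring
    by_cases h₁ : (z, u) ∈ {p : ℂ × ℂ | ‖p.2‖ > ε * (ℓ₁ p.1 + ℓ₁ (p.1 + p.2)) / 2} <;>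
      by_cases h₂ : (z, u) ∈ {p : ℂ × ℂ | ‖p.2‖ > ε * (ℓ₂ p.1 + ℓ₂ (p.1 + p.2)) / 2}
    · rw [Set.indicator_of_mem h₁, Set.indicator_of_mem h₂]
      simpa using hRHS0
    · have hl₁ : ε * (ℓ₁ z + ℓ₁ (z + u)) / 2 < ‖u‖ := h₁
      have hl₂ : ‖u‖ ≤ ε * (ℓ₂ z + ℓ₂ (z + u)) / 2 := not_lt.1 h₂
      exact hfinal (lt_of_le_of_lt (by nlinarith [hcz.1, hczu.1]) hl₁)
        (hl₂.trans (by nlinarith [hℓ₂C z, hℓ₂C (z + u)]))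
        (by rw [Set.indicator_of_mem h₁, Set.indicator_of_notMem h₂]; simp)
    · have hl₂ : ε * (ℓ₂ z + ℓ₂ (z + u)) / 2 < ‖u‖ := h₂
      have hl₁ : ‖u‖ ≤ ε * (ℓ₁ z + ℓ₁ (z + u)) / 2 := not_lt.1 h₁
      exact hfinal (lt_of_le_of_lt (by nlinarith [hcz.2, hczu.2]) hl₂)
        (hl₁.trans (by nlinarith [hℓ₁C z, hℓ₁C (z + u)]))
        (by rw [Set.indicator_of_notMem h₁, Set.indicator_of_mem h₂]; simp)
    · rw [Set.indicator_of_notMem h₁, Set.indicator_of_notMem h₂]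
      simpa using hRHS0
  -- integrability of indicator constants
  have hint : ∀ (r a : ℝ), Integrable
      ((Metric.closedBall (0 : ℂ) r).indicator (fun _ => a)) volume := by
    intro r a
    rw [integrable_indicator_iff measurableSet_closedBall]
    exact integrableOn_const measure_closedBall_lt_top.ne
  -- bound on the inner integral
  have hinner : ∀ z : ℂ,
      ‖∫ u : ℂ,
          Complex.ofReal
              ((Set.indicator {p : ℂ × ℂ | ‖p.2‖ > ε * (ℓ₁ p.1 + ℓ₁ (p.1 + p.2)) / 2}
                (fun _ => (1 : ℝ)) (z, u))
              - (Set.indicator {p : ℂ × ℂ | ‖p.2‖ > ε * (ℓ₂ p.1 + ℓ₂ (p.1 + p.2)) / 2}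
                (fun _ => (1 : ℝ)) (z, u)))
            * φ (z, u) * Complex.ofReal ((‖u‖ ^ 2)⁻¹) ∂volume‖
      ≤ (Metric.closedBall (0 : ℂ) R).indicator
          (fun _ => δ * ((ε * c) ^ 2)⁻¹
            * (volume (Metric.closedBall (0 : ℂ) (ε * C))).toReal) z := by
    intro z
    by_cases hz : z ∈ Metric.closedBall (0 : ℂ) R
    · rw [Set.indicator_of_mem hz]
      calc ‖∫ u : ℂ, _ ∂volume‖ ≤ ∫ u : ℂ, ‖Complex.ofReal
              ((Set.indicator {p : ℂ × ℂ | ‖p.2‖ > ε * (ℓ₁ p.1 + ℓ₁ (p.1 + p.2)) / 2}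
                (fun _ => (1 : ℝ)) (z, u))
              - (Set.indicator {p : ℂ × ℂ | ‖p.2‖ > ε * (ℓ₂ p.1 + ℓ₂ (p.1 + p.2)) / 2}
                (fun _ => (1 : ℝ)) (z, u)))
            * φ (z, u) * Complex.ofReal ((‖u‖ ^ 2)⁻¹)‖ ∂volume :=
          norm_integral_le_integral_norm _
        _ ≤ ∫ u : ℂ, (Metric.closedBall (0 : ℂ) (ε * C)).indicator
            (fun _ => δ * ((ε * c) ^ 2)⁻¹) u ∂volume := by
            apply integral_mono_of_nonneg
            · exact Filter.Eventually.of_forall fun u => norm_nonneg _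
            · exact hint _ _
            · apply Filter.Eventually.of_forall
              intro u
              have := hpoint z u
              rwa [Set.indicator_of_mem hz] at this
        _ = δ * ((ε * c) ^ 2)⁻¹
            * (volume (Metric.closedBall (0 : ℂ) (ε * C))).toReal := by
            rw [integral_indicator_const _ measurableSet_closedBall,
              smul_eq_mul, mul_comm]
            rfl
    · rw [Set.indicator_of_notMem hz]
      have hzero : ∀ u : ℂ,
          (Complex.ofReal
              ((Set.indicator {p : ℂ × ℂ | ‖p.2‖ > ε * (ℓ₁ p.1 + ℓ₁ (p.1 + p.2)) / 2}
                (fun _ => (1 : ℝ)) (z, u))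
              - (Set.indicator {p : ℂ × ℂ | ‖p.2‖ > ε * (ℓ₂ p.1 + ℓ₂ (p.1 + p.2)) / 2}
                (fun _ => (1 : ℝ)) (z, u)))
            * φ (z, u) * Complex.ofReal ((‖u‖ ^ 2)⁻¹)) = 0 := by
        intro u
        have := hpoint z u
        rw [Set.indicator_of_notMem hz] at this
        exact norm_le_zero_iff.1 this
      simp only [hzero, integral_zero, norm_zero, le_refl]
  -- bound on the outer integral
  have hvol : (volume (Metric.closedBall (0 : ℂ) (ε * C))).toReal = (ε * C) ^ 2 * V := by
    rw [hVdef, Measure.addHaar_closedBall' volume (0 : ℂ) hεC0.le,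
      Complex.finrank_real_complex, ENNReal.toReal_mul,
      ENNReal.toReal_ofReal (by positivity)]
  have hbound : ‖∫ z : ℂ, (∫ u : ℂ,
          Complex.ofReal
              ((Set.indicator {p : ℂ × ℂ | ‖p.2‖ > ε * (ℓ₁ p.1 + ℓ₁ (p.1 + p.2)) / 2}
                (fun _ => (1 : ℝ)) (z, u))
              - (Set.indicator {p : ℂ × ℂ | ‖p.2‖ > ε * (ℓ₂ p.1 + ℓ₂ (p.1 + p.2)) / 2}
                (fun _ => (1 : ℝ)) (z, u)))
            * φ (z, u) * Complex.ofReal ((‖u‖ ^ 2)⁻¹) ∂volume) ∂volume‖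
      ≤ δ * A := by
    calc ‖∫ z : ℂ, _ ∂volume‖ ≤ ∫ z : ℂ, ‖∫ u : ℂ,
          Complex.ofReal
              ((Set.indicator {p : ℂ × ℂ | ‖p.2‖ > ε * (ℓ₁ p.1 + ℓ₁ (p.1 + p.2)) / 2}
                (fun _ => (1 : ℝ)) (z, u))
              - (Set.indicator {p : ℂ × ℂ | ‖p.2‖ > ε * (ℓ₂ p.1 + ℓ₂ (p.1 + p.2)) / 2}
                (fun _ => (1 : ℝ)) (z, u)))
            * φ (z, u) * Complex.ofReal ((‖u‖ ^ 2)⁻¹) ∂volume‖ ∂volume :=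
        norm_integral_le_integral_norm _
      _ ≤ ∫ z : ℂ, (Metric.closedBall (0 : ℂ) R).indicator
          (fun _ => δ * ((ε * c) ^ 2)⁻¹
            * (volume (Metric.closedBall (0 : ℂ) (ε * C))).toReal) z ∂volume := by
          apply integral_mono_of_nonneg
          · exact Filter.Eventually.of_forall fun z => norm_nonneg _
          · exact hint _ _
          · exact Filter.Eventually.of_forall hinner
      _ = δ * ((ε * c) ^ 2)⁻¹
            * (volume (Metric.closedBall (0 : ℂ) (ε * C))).toReal * W := by
          rw [hWdef, integral_indicator_const _ measurableSet_closedBall,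
            smul_eq_mul, mul_comm]
          rfl
      _ = δ * A := by
          rw [hvol, hAdef]
          field_simp
  refine lt_of_le_of_lt hbound ?_
  rw [hδdef]
  rw [div_mul_eq_mul_div, div_lt_iff₀ (by linarith : (0:ℝ) < A + 1)]
  nlinarith
end
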